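/- arXiv:2005.09462 — 5 statements merged into one kernel-verified Lean document; each statement's English description precedes it below -/
import Mathlib

section
/- For every tree T with n vertices and every edge e of T, the number of k-element subsets A of V(T) whose Steiner tree contains the edge e equals C(n,k) - C(n_1(e),k) - C(n_2(e),k), where n_1(e) and n_2(e) are the orders of the two components of T - e. Consequently, the k-Steiner Wiener index satisfies SW_k(T) = Σ_{e ∈ E(T)} [C(n,k) - C(n_1(e),k) - C(n_2(e),k)]. -/
open SimpleGraph Finset

attribute [local instance] Classical.propDecidable

variable {V : Type*}

/-- The eccentricity of a vertex: the maximum distance to any other vertex. -/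
noncomputable def ecc [Fintype V] (G : SimpleGraph V) (v : V) : ℕ :=
  Finset.univ.sup fun u => G.dist v u

/-- The diameter: the maximum eccentricity. -/
noncomputable def graphDiam [Fintype V] (G : SimpleGraph V) : ℕ :=
  Finset.univ.sup fun v => ecc G v

/-- The radius: the minimum eccentricity. -/
noncomputable def graphRad [Fintype V] [Nonempty V] (G : SimpleGraph V) : ℕ :=
  Finset.univ.inf' Finset.univ_nonempty fun v => ecc G v

/-- The Wiener-type index `W(G;g)`: sum of `g (d(u,v))` over unordered pairs of
distinct vertices (here realised as half of the sum over ordered pairs). -/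
noncomputable def wiener [Fintype V] (G : SimpleGraph V) (g : ℕ → ℝ) : ℝ :=
  (∑ p ∈ Finset.univ.offDiag, g (G.dist p.1 p.2)) / 2

/-- Steiner distance of a set `A`: minimum number of edges of a subtree whose
vertex set contains `A` (in a tree, a connected subgraph on `m+1` vertices has `m` edges). -/
noncomputable def steinerDist [Fintype V] (G : SimpleGraph V) (A : Finset V) : ℕ :=
  sInf {m | ∃ S : Finset V, A ⊆ S ∧ (G.induce (S : Set V)).Connected ∧ S.card = m + 1}

/-- The `k`-Steiner Wiener index. -/
noncomputable def steinerWiener [Fintype V] (G : SimpleGraph V) (k : ℕ) : ℕ :=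
  ∑ A ∈ Finset.univ.powersetCard k, steinerDist G A

/-- A leaf (pendent vertex): a vertex of degree 1. -/
def IsLeaf (G : SimpleGraph V) (v : V) : Prop :=
  Nat.card {u : V // G.Adj v u} = 1

/-- A caterpillar: a tree in which deleting all leaves yields a path;
equivalently (for trees) every non-leaf vertex has at most two non-leaf neighbours. -/
def IsCaterpillar (G : SimpleGraph V) : Prop :=
  ∀ v : V, ¬ IsLeaf G v → Nat.card {u : V // G.Adj v u ∧ ¬ IsLeaf G u} ≤ 2

/-- Two graphs have the same eccentric sequence. -/
def sameEccSeq {W : Type*} [Fintype V] [Fintype W]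
    (G : SimpleGraph V) (H : SimpleGraph W) : Prop :=
  ∀ k : ℕ, Nat.card {v : V // ecc G v = k} = Nat.card {w : W // ecc H w = k}

/-- The number of vertices of the component of `a` in `G` minus the edge `ab`. -/
noncomputable def compSize [Fintype V] (G : SimpleGraph V) (a b : V) : ℕ :=
  Nat.card {x : V // (G.deleteEdges {s(a, b)}).Reachable a x}

/-- The Steiner tree of `A` (the minimum connected subtree containing `A`) contains
the edge `ab`, i.e. some minimum-order connected superset of `A` contains both `a` and `b`. -/
def steinerContains [Fintype V] (G : SimpleGraph V) (A : Finset V) (a b : V) : Prop :=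
  ∃ S : Finset V, A ⊆ S ∧ (G.induce (S : Set V)).Connected ∧
    S.card = steinerDist G A + 1 ∧ a ∈ S ∧ b ∈ S

set_option linter.unusedSectionVars false
set_option linter.unusedVariables false

section helpers

variable {W : Type*} {H : SimpleGraph W}

lemma reach_of_walk_aux {a b : W} {u x : W} (p : H.Walk u x)
    (hu : (H.deleteEdges {s(a,b)}).Reachable a u ∨ (H.deleteEdges {s(a,b)}).Reachable b u) :
    (H.deleteEdges {s(a,b)}).Reachable a x ∨ (H.deleteEdges {s(a,b)}).Reachable b x := by
  induction p with
  | nil => exact hu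
  | @cons u v w h q ih =>
    apply ih
    by_cases he : s(u,v) = s(a,b)
    · rw [Sym2.eq_iff] at he
      rcases he with ⟨rfl, rfl⟩ | ⟨rfl, rfl⟩
      · exact Or.inr Reachable.rfl
      · exact Or.inl Reachable.rfl
    · have hadj : (H.deleteEdges {s(a,b)}).Adj u v := by
        rw [deleteEdges_adj]
        exact ⟨h, by simpa using he⟩
      rcases hu with h1 | h1
      · exact Or.inl (h1.trans hadj.reachable)
      · exact Or.inr (h1.trans hadj.reachable)

lemma sides_cover (hc : H.Preconnected) {a b : W} (hab : H.Adj a b) (x : W) :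
    (H.deleteEdges {s(a,b)}).Reachable a x ∨ (H.deleteEdges {s(a,b)}).Reachable b x :=
  reach_of_walk_aux (hc a x).some (Or.inl Reachable.rfl)

lemma sides_disj (hac : H.IsAcyclic) {a b : W} (hab : H.Adj a b) {x : W}
    (h1 : (H.deleteEdges {s(a,b)}).Reachable a x)
    (h2 : (H.deleteEdges {s(a,b)}).Reachable b x) : False := by
  have hbr := isAcyclic_iff_forall_adj_isBridge.mp hac hab
  rw [isBridge_iff] at hbr
  exact hbr (h1.trans h2.symm)

lemma reachable_induce_of_walk {S : Set W} {u v : W} (p : H.Walk u v)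
    (hp : ∀ x ∈ p.support, x ∈ S) (hu : u ∈ S) (hv : v ∈ S) :
    (H.induce S).Reachable ⟨u, hu⟩ ⟨v, hv⟩ := by
  induction p with
  | nil => rfl
  | @cons u z w h q ih =>
    have hz : z ∈ S := hp z (by simp)
    have hadj : (H.induce S).Adj ⟨u, hu⟩ ⟨z, hz⟩ := h
    exact hadj.reachable.trans (ih (fun x hx => hp x (by simp [hx])) hz hv)

lemma walk_delete_induce_to_delete {S : Set W} {a b : W} (ha : a ∈ S) (hb : b ∈ S)
    {x y : ↥S}
    (q : ((H.induce S).deleteEdges {s((⟨a,ha⟩ : ↥S), (⟨b,hb⟩ : ↥S))}).Walk x y) :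
    (H.deleteEdges {s(a,b)}).Reachable ↑x ↑y := by
  induction q with
  | nil => exact Reachable.rfl
  | @cons u z w h q ih =>
    have h' := h
    rw [deleteEdges_adj] at h'
    have hadj : (H.deleteEdges {s(a,b)}).Adj ↑u ↑z := by
      rw [deleteEdges_adj]
      refine ⟨h'.1, ?_⟩
      intro hmem
      apply h'.2
      simp only [Set.mem_singleton_iff, Sym2.eq_iff] at hmem ⊢
      rcases hmem with ⟨h1, h2⟩ | ⟨h1, h2⟩
      · exact Or.inl ⟨Subtype.ext h1, Subtype.ext h2⟩
      · exact Or.inr ⟨Subtype.ext h1, Subtype.ext h2⟩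
    exact hadj.reachable.trans ih

lemma isAcyclic_induce (hac : H.IsAcyclic) (S : Set W) : (H.induce S).IsAcyclic := by
  intro v c hc
  exact hac (c.map (Embedding.induce S).toHom) (hc.map Subtype.val_injective)

end helpers

section tree
variable [Fintype V] {G : SimpleGraph V}

lemma mem_of_crossing (hG : G.IsTree) {S : Finset V} {a b u v : V} (hab : G.Adj a b)
    (hconn : (G.induce (S : Set V)).Connected) (hu : u ∈ S) (hv : v ∈ S)
    (hau : (G.deleteEdges {s(a,b)}).Reachable a u)
    (hbv : (G.deleteEdges {s(a,b)}).Reachable b v) : a ∈ S ∧ b ∈ S := by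
  obtain ⟨q⟩ := hconn.preconnected ⟨u, hu⟩ ⟨v, hv⟩
  set p : G.Walk u v := q.map (Embedding.induce (S : Set V)).toHom with hp
  have hsupp : ∀ x ∈ p.support, x ∈ S := by
    intro x hx
    have hx' : x ∈ (q.map (Embedding.induce (S : Set V)).toHom).support := hx
    rw [Walk.support_map, List.mem_map] at hx'
    obtain ⟨z, _, rfl⟩ := hx'
    exact z.2
  by_cases hedge : s(a,b) ∈ p.edges
  · exact ⟨hsupp a (p.fst_mem_support_of_mem_edges hedge),
      hsupp b (p.snd_mem_support_of_mem_edges hedge)⟩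
  · exfalso
    have hw : (G.deleteEdges {s(a,b)}).Reachable u v :=
      ⟨p.toDeleteEdges _ (by intro e he hmem; rw [Set.mem_singleton_iff] at hmem; exact hedge (hmem ▸ he))⟩
    exact sides_disj hG.IsAcyclic hab (hau.trans hw) hbv

lemma meets_side_of_minimal (hG : G.IsTree) {a b : V} (hab : G.Adj a b) {A S : Finset V}
    (hA : A.Nonempty) (hAS : A ⊆ S) (hconn : (G.induce (S : Set V)).Connected)
    (hcard : S.card = steinerDist G A + 1) (haS : a ∈ S) (hbS : b ∈ S) :
    ∃ u ∈ A, (G.deleteEdges {s(a,b)}).Reachable a u := by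
  by_contra hcon
  push_neg at hcon
  have hAb : ∀ u ∈ A, (G.deleteEdges {s(a,b)}).Reachable b u := fun u hu =>
    (sides_cover hG.isConnected.preconnected hab u).resolve_left (hcon u hu)
  set T' := G.induce (S : Set V) with hT'
  have hT'acyc : T'.IsAcyclic := isAcyclic_induce hG.IsAcyclic _
  set a' : ↥(S : Set V) := ⟨a, by exact haS⟩ with ha'
  set b' : ↥(S : Set V) := ⟨b, by exact hbS⟩ with hb'
  have hab' : T'.Adj a' b' := hab
  -- every vertex of S on the b-side of e is on the b'-side in T'
  have hsideb : ∀ x : ↥(S : Set V), (G.deleteEdges {s(a,b)}).Reachable b ↑x →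
      (T'.deleteEdges {s(a', b')}).Reachable b' x := by
    intro x hx
    rcases sides_cover hconn.preconnected hab' x with h1 | h1
    · exfalso
      obtain ⟨q⟩ := h1
      exact sides_disj hG.IsAcyclic hab (walk_delete_induce_to_delete haS hbS q) hx
    · exact h1
  set S' : Finset V := S.filter (fun x => (G.deleteEdges {s(a,b)}).Reachable b x) with hS'
  have hAS' : A ⊆ S' := fun u hu => mem_filter.mpr ⟨hAS hu, hAb u hu⟩
  have haS' : a ∉ S' := by
    intro h
    exact sides_disj hG.IsAcyclic hab Reachable.rfl (mem_filter.mp h).2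
  have hconn' : (G.induce (S' : Set V)).Connected := by
    rw [connected_iff]
    constructor
    · rintro ⟨x, hx⟩ ⟨y, hy⟩
      rw [mem_coe, hS', mem_filter] at hx hy
      have hx' := hsideb ⟨x, hx.1⟩ hx.2
      have hy' := hsideb ⟨y, hy.1⟩ hy.2
      obtain ⟨q⟩ := hx'.symm.trans hy'
      -- every support vertex of q is reachable from b
      have hqsupp : ∀ z ∈ q.support, (G.deleteEdges {s(a,b)}).Reachable b ↑z := by
        intro z hz
        have := walk_delete_induce_to_delete haS hbS (q.takeUntil z hz)
        exact hx.2.trans this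
      set p : G.Walk x y :=
        (q.mapLe (deleteEdges_le _)).map (Embedding.induce (S : Set V)).toHom with hpdef
      have hpsupp : ∀ z ∈ p.support, z ∈ (S' : Set V) := by
        intro z hz
        have hz' : z ∈ ((q.mapLe (deleteEdges_le _)).map (Embedding.induce (S : Set V)).toHom).support := hz
        rw [Walk.support_map, List.mem_map] at hz'
        obtain ⟨w, hw, rfl⟩ := hz'
        have hw' : w ∈ q.support := by
          have := Walk.support_map (f := Hom.ofLE (deleteEdges_le _)) (p := q)
          rw [Walk.mapLe] at hw
          rw [this] at hw
          simpa using hw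
        rw [mem_coe, hS', mem_filter]
        exact ⟨w.2, hqsupp w hw'⟩
      have := reachable_induce_of_walk p hpsupp (by exact_mod_cast mem_coe.mpr (mem_filter.mpr ⟨hx.1, hx.2⟩)) (by exact_mod_cast mem_coe.mpr (mem_filter.mpr ⟨hy.1, hy.2⟩))
      exact this
    · obtain ⟨u, hu⟩ := hA
      exact ⟨⟨u, mem_coe.mpr (hAS' hu)⟩⟩
  have hS'sub : S' ⊆ S := filter_subset _ _
  have hlt : S'.card < S.card := card_lt_card ⟨hS'sub, fun h => haS' (h haS)⟩
  obtain ⟨u0, hu0⟩ := hA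
  have hpos : 1 ≤ S'.card := card_pos.mpr ⟨u0, hAS' hu0⟩
  have hle : steinerDist G A ≤ S'.card - 1 :=
    Nat.sInf_le ⟨S', hAS', hconn', (Nat.sub_add_cancel hpos).symm⟩
  omega

lemma steinerDist_spec (hG : G.IsTree) (A : Finset V) :
    ∃ S : Finset V, A ⊆ S ∧ (G.induce (S : Set V)).Connected ∧
      S.card = steinerDist G A + 1 := by
  have hne : Nonempty V := hG.isConnected.nonempty
  have hpos : 0 < Fintype.card V := Fintype.card_pos
  have hmem : Fintype.card V - 1 ∈
      {m | ∃ S : Finset V, A ⊆ S ∧ (G.induce (S : Set V)).Connected ∧ S.card = m + 1} := by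
    refine ⟨univ, subset_univ _, ?_, ?_⟩
    · rw [coe_univ]
      exact (induceUnivIso G).connected_iff.mpr hG.isConnected
    · rw [card_univ]; omega
  exact Nat.sInf_mem ⟨_, hmem⟩

lemma steinerDist_empty (hG : G.IsTree) : steinerDist G (∅ : Finset V) = 0 := by
  have hne : Nonempty V := hG.isConnected.nonempty
  obtain ⟨v⟩ := hne
  apply Nat.sInf_eq_zero.mpr
  left
  refine ⟨{v}, empty_subset _, ?_, by simp⟩
  rw [coe_singleton, induce_singleton_eq_top]
  exact connected_top

lemma not_contains_empty (hG : G.IsTree) {a b : V} (hab : G.Adj a b) :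
    ¬ steinerContains G (∅ : Finset V) a b := by
  rintro ⟨S, -, -, hcard, ha, hb⟩
  rw [steinerDist_empty hG] at hcard
  obtain ⟨x, rfl⟩ := card_eq_one.mp hcard
  rw [mem_singleton] at ha hb
  exact hab.ne (ha.trans hb.symm)

lemma contains_iff_meets (hG : G.IsTree) {A : Finset V} (hA : A.Nonempty) {a b : V}
    (hab : G.Adj a b) :
    steinerContains G A a b ↔
      (∃ u ∈ A, (G.deleteEdges {s(a,b)}).Reachable a u) ∧
      (∃ v ∈ A, (G.deleteEdges {s(a,b)}).Reachable b v) := by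
  constructor
  · rintro ⟨S, hAS, hconn, hcard, ha, hb⟩
    refine ⟨meets_side_of_minimal hG hab hA hAS hconn hcard ha hb, ?_⟩
    have := meets_side_of_minimal hG hab.symm hA hAS hconn hcard hb ha
    rwa [Sym2.eq_swap (a := b)] at this
  · rintro ⟨⟨u, hu, hau⟩, ⟨v, hv, hbv⟩⟩
    obtain ⟨S, hAS, hconn, hcard⟩ := steinerDist_spec hG A
    obtain ⟨ha, hb⟩ := mem_of_crossing hG hab hconn (hAS hu) (hAS hv) hau hbv
    exact ⟨S, hAS, hconn, hcard, ha, hb⟩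

lemma contains_iff_mem (hG : G.IsTree) {A S : Finset V} (hA : A.Nonempty) (hAS : A ⊆ S)
    (hconn : (G.induce (S : Set V)).Connected) (hcard : S.card = steinerDist G A + 1)
    {a b : V} (hab : G.Adj a b) :
    steinerContains G A a b ↔ a ∈ S ∧ b ∈ S := by
  rw [contains_iff_meets hG hA hab]
  constructor
  · rintro ⟨⟨u, hu, hau⟩, ⟨v, hv, hbv⟩⟩
    exact mem_of_crossing hG hab hconn (hAS hu) (hAS hv) hau hbv
  · rintro ⟨ha, hb⟩
    refine ⟨meets_side_of_minimal hG hab hA hAS hconn hcard ha hb, ?_⟩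
    have := meets_side_of_minimal hG hab.symm hA hAS hconn hcard hb ha
    rwa [Sym2.eq_swap (a := b)] at this

lemma compSize_eq (a b : V) :
    compSize G a b = (univ.filter fun x => (G.deleteEdges {s(a,b)}).Reachable a x).card := by
  rw [compSize, Nat.card_eq_fintype_card, Fintype.card_subtype]


lemma count_pairs (hG : G.IsTree) (A : Finset V) :
    (univ.filter fun p : V × V => G.Adj p.1 p.2 ∧ steinerContains G A p.1 p.2).card
      = 2 * steinerDist G A := by
  rcases A.eq_empty_or_nonempty with rfl | hA
  · rw [steinerDist_empty hG, mul_zero, card_eq_zero]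
    apply filter_eq_empty_iff.mpr
    rintro p -
    rintro ⟨hadj, hcon⟩
    exact not_contains_empty hG hadj hcon
  · obtain ⟨S, hAS, hconn, hcard⟩ := steinerDist_spec hG A
    have h1 : (univ.filter fun p : V × V => G.Adj p.1 p.2 ∧ steinerContains G A p.1 p.2)
        = (univ.filter fun p : V × V => G.Adj p.1 p.2 ∧ p.1 ∈ S ∧ p.2 ∈ S) := by
      apply filter_congr
      rintro p -
      constructor
      · rintro ⟨hadj, hc⟩
        exact ⟨hadj, (contains_iff_mem hG hA hAS hconn hcard hadj).mp hc⟩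
      · rintro ⟨hadj, hm⟩
        exact ⟨hadj, (contains_iff_mem hG hA hAS hconn hcard hadj).mpr hm⟩
    rw [h1]
    -- relate with the induced tree on S
    have hTree : (G.induce (S : Set V)).IsTree := ⟨hconn, isAcyclic_induce hG.IsAcyclic _⟩
    classical
    have hcardV : Fintype.card ↥(S : Set V) = S.card := Fintype.card_coe S
    have hedge := hTree.card_edgeFinset
    rw [hcardV, hcard] at hedge
    have h2 := SimpleGraph.two_mul_card_edgeFinset (G := G.induce (S : Set V))
    have h3 : (univ.filter fun p : ↥(S : Set V) × ↥(S : Set V) =>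
        (G.induce (S : Set V)).Adj p.1 p.2).card
        = (univ.filter fun p : V × V => G.Adj p.1 p.2 ∧ p.1 ∈ S ∧ p.2 ∈ S).card := by
      apply card_bij (fun q _ => ((q.1 : V), (q.2 : V)))
      · rintro ⟨x, y⟩ hq
        rw [mem_filter] at hq ⊢
        exact ⟨mem_univ _, hq.2, x.2, y.2⟩
      · rintro ⟨x1, y1⟩ - ⟨x2, y2⟩ - h
        rw [Prod.mk.injEq] at h
        rw [Prod.mk.injEq]
        exact ⟨Subtype.ext h.1, Subtype.ext h.2⟩
      · rintro ⟨x, y⟩ hp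
        rw [mem_filter] at hp
        obtain ⟨-, hadj, hx, hy⟩ := hp
        refine ⟨(⟨x, hx⟩, ⟨y, hy⟩), ?_, rfl⟩
        rw [mem_filter]
        exact ⟨mem_univ _, hadj⟩
    rw [← h3, ← h2]
    omega

lemma part1 (hG : G.IsTree) (k : ℕ) {a b : V} (hab : G.Adj a b) :
    ((Finset.univ.powersetCard k).filter (fun A => steinerContains G A a b)).card =
      Nat.choose (Fintype.card V) k - Nat.choose (compSize G a b) k -
        Nat.choose (compSize G b a) k := by
  rcases Nat.eq_zero_or_pos k with rfl | hk
  · rw [powersetCard_zero]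
    rw [filter_singleton]
    rw [if_neg (not_contains_empty hG hab)]
    simp
  · set R := (G.deleteEdges {s(a,b)}).Reachable with hR
    set Fab : Finset V := univ.filter fun x => R a x with hFab
    set Fba : Finset V := univ.filter fun x => R b x with hFba
    have hcov : ∀ x : V, R a x ∨ R b x := sides_cover hG.isConnected.preconnected hab
    have hdisj : ∀ x : V, R a x → R b x → False := fun x => sides_disj hG.IsAcyclic hab
    have h1 : ∀ A ∈ Finset.univ.powersetCard k,
        (steinerContains G A a b ↔ ¬(A ⊆ Fab ∨ A ⊆ Fba)) := by
      intro A hAmem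
      have hcard : A.card = k := (mem_powersetCard.mp hAmem).2
      have hA : A.Nonempty := card_pos.mp (hcard ▸ hk)
      rw [contains_iff_meets hG hA hab]
      have e1 : (∃ u ∈ A, R a u) ↔ ¬ A ⊆ Fba := by
        constructor
        · rintro ⟨u, hu, hau⟩ hsub
          exact hdisj u hau (mem_filter.mp (hsub hu)).2
        · intro hsub
          obtain ⟨u, hu, hnot⟩ := Finset.not_subset.mp hsub
          have hnb : ¬ R b u := fun h => hnot (mem_filter.mpr ⟨mem_univ _, h⟩)
          exact ⟨u, hu, (hcov u).resolve_right hnb⟩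
      have e2 : (∃ v ∈ A, R b v) ↔ ¬ A ⊆ Fab := by
        constructor
        · rintro ⟨v, hv, hbv⟩ hsub
          exact hdisj v (mem_filter.mp (hsub hv)).2 hbv
        · intro hsub
          obtain ⟨v, hv, hnot⟩ := Finset.not_subset.mp hsub
          have hna : ¬ R a v := fun h => hnot (mem_filter.mpr ⟨mem_univ _, h⟩)
          exact ⟨v, hv, (hcov v).resolve_left hna⟩
      rw [e1, e2]
      tauto
    rw [filter_congr h1, filter_not, card_sdiff_of_subset (filter_subset _ _)]
    have hd : Disjoint ((Finset.univ.powersetCard k).filter fun A => A ⊆ Fab)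
        ((Finset.univ.powersetCard k).filter fun A => A ⊆ Fba) := by
      rw [Finset.disjoint_left]
      intro A hA1 hA2
      rw [mem_filter] at hA1 hA2
      have hcard : A.card = k := (mem_powersetCard.mp hA1.1).2
      obtain ⟨u, hu⟩ := card_pos.mp (hcard ▸ hk)
      exact hdisj u (mem_filter.mp (hA1.2 hu)).2 (mem_filter.mp (hA2.2 hu)).2
    have hab' : ((Finset.univ.powersetCard k).filter fun A => A ⊆ Fab) = Fab.powersetCard k := by
      ext A
      simp only [mem_filter, mem_powersetCard, subset_univ, true_and]
      tauto
    have hba' : ((Finset.univ.powersetCard k).filter fun A => A ⊆ Fba) = Fba.powersetCard k := by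
      ext A
      simp only [mem_filter, mem_powersetCard, subset_univ, true_and]
      tauto
    have hc1 : Fab.card = compSize G a b := (compSize_eq a b).symm
    have hc2 : Fba.card = compSize G b a := by
      rw [compSize_eq b a, Sym2.eq_swap (a := b) (b := a)]
    rw [filter_or, card_union_of_disjoint hd, hab', hba', card_powersetCard,
      card_powersetCard, card_powersetCard, card_univ, hc1, hc2]
    omega

end tree

/-- For a tree `T` on `n` vertices and an edge `e = ab`, the number of `k`-subsets whose
Steiner tree contains `e` is `C(n,k) - C(n₁(e),k) - C(n₂(e),k)`; consequently
`SW_k(T) = Σ_{e} (C(n,k) - C(n₁(e),k) - C(n₂(e),k))` (each edge counted once;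
below each edge appears as two ordered pairs, whence the factor `2`). -/
theorem stmt5 [Fintype V] (G : SimpleGraph V) (hG : G.IsTree) (k : ℕ) :
    (∀ a b : V, G.Adj a b →
      ((Finset.univ.powersetCard k).filter (fun A => steinerContains G A a b)).card =
        Nat.choose (Fintype.card V) k - Nat.choose (compSize G a b) k -
          Nat.choose (compSize G b a) k) ∧
    2 * steinerWiener G k =
      ∑ p ∈ Finset.univ.filter (fun p : V × V => G.Adj p.1 p.2),
        (Nat.choose (Fintype.card V) k - Nat.choose (compSize G p.1 p.2) k -
          Nat.choose (compSize G p.2 p.1) k) := by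
  refine ⟨fun a b hab => part1 hG k hab, ?_⟩
  have hstep : ∀ p ∈ Finset.univ.filter (fun p : V × V => G.Adj p.1 p.2),
      (Nat.choose (Fintype.card V) k - Nat.choose (compSize G p.1 p.2) k -
          Nat.choose (compSize G p.2 p.1) k)
        = ((Finset.univ.powersetCard k).filter
            (fun A => steinerContains G A p.1 p.2)).card := by
    intro p hp
    exact (part1 hG k (mem_filter.mp hp).2).symm
  rw [Finset.sum_congr rfl hstep]
  have hcf : ∀ p : V × V, ((Finset.univ.powersetCard k).filter
      (fun A => steinerContains G A p.1 p.2)).card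
      = ∑ A ∈ Finset.univ.powersetCard k, if steinerContains G A p.1 p.2 then 1 else 0 := by
    intro p
    rw [Finset.card_filter]
  simp_rw [hcf]
  rw [Finset.sum_comm]
  have hinner : ∀ A : Finset V,
      (∑ p ∈ Finset.univ.filter (fun p : V × V => G.Adj p.1 p.2),
        if steinerContains G A p.1 p.2 then 1 else 0) = 2 * steinerDist G A := by
    intro A
    rw [← Finset.card_filter, Finset.filter_filter, count_pairs hG A]
  rw [Finset.sum_congr rfl (fun A _ => hinner A), steinerWiener, Finset.mul_sum]
end

section
/- For every tree T with n ≥ 3 vertices, SW_3(T) = ((n-2)/2) · W(T), i.e., 2·SW_3(T) = (n-2)·W(T). -/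
open SimpleGraph Finset

attribute [local instance] Classical.propDecidable

variable {V : Type*}

section Aux
variable {W : Type*} {H : SimpleGraph W}

lemma aux_path_length (hH : H.IsTree) {a b : W} {p : H.Walk a b} (hp : p.IsPath) :
    p.length = H.dist a b := by
  obtain ⟨q, hq⟩ := hH.isConnected.exists_walk_length_eq_dist a b
  have hq' : q.IsPath := q.isPath_of_length_eq_dist hq
  have hpq : p = q := congrArg Subtype.val (hH.IsAcyclic.path_unique ⟨p, hp⟩ ⟨q, hq'⟩)
  rw [hpq, hq]

lemma aux_exists_first (S : Set W) {a b : W} (r : H.Walk a b) (hb : b ∈ S) :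
    ∃ (m : W) (r₁ : H.Walk a m) (r₂ : H.Walk m b), m ∈ S ∧ r = r₁.append r₂ ∧
      ∀ x ∈ r₁.support, x ∈ S → x = m := by
  induction r with
  | nil => exact ⟨_, .nil, .nil, hb, rfl, by simp⟩
  | @cons a c b h r' ih =>
    by_cases ha : a ∈ S
    · exact ⟨_, .nil, Walk.cons h r', ha, rfl, by simp⟩
    · obtain ⟨m, r₁, r₂, hm, heq, hcond⟩ := ih hb
      refine ⟨m, Walk.cons h r₁, r₂, hm, by rw [Walk.cons_append, heq], ?_⟩
      intro x hx hxS
      rcases (by simpa using hx : x = a ∨ x ∈ r₁.support) with rfl | hx'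
      · exact absurd hxS ha
      · exact hcond x hx' hxS

lemma tree_median (hH : H.IsTree) (u v w : W) :
    ∃ (a b c : ℕ), H.dist u v = a + b ∧ H.dist v w = b + c ∧ H.dist u w = a + c ∧
      ∃ t : Finset W, u ∈ t ∧ v ∈ t ∧ w ∈ t ∧ (H.induce (t : Set W)).Connected ∧
        t.card = a + b + c + 1 := by
  classical
  obtain ⟨p, hpd⟩ := hH.isConnected.exists_walk_length_eq_dist u v
  have hp : p.IsPath := p.isPath_of_length_eq_dist hpd
  obtain ⟨r, hrd⟩ := hH.isConnected.exists_walk_length_eq_dist u w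
  have hr : r.IsPath := r.isPath_of_length_eq_dist hrd
  set S : Set W := {x | x ∈ p.support} with hSdef
  obtain ⟨m, r₁, r₂, hmS, heq, hfirst⟩ := aux_exists_first S r.reverse p.start_mem_support
  have hr' : r.reverse.IsPath := hr.reverse
  rw [heq] at hr'
  have hr₁ : r₁.IsPath := hr'.of_append_left
  have hr₂ : r₂.IsPath := hr'.of_append_right
  have hm : m ∈ p.support := hmS
  set p₁ := p.takeUntil m hm with hp₁def
  set p₂ := p.dropUntil m hm with hp₂def
  have hp₁ : p₁.IsPath := hp.takeUntil hm
  have hp₂ : p₂.IsPath := hp.dropUntil hm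
  have hdisj : ∀ x ∈ r₁.support, x ∈ S → x = m := hfirst
  -- key nodup facts
  have hnodup₁ : r₁.reverse.support.Nodup := hr₁.reverse.support_nodup
  have hhead : r₁.reverse.support = m :: r₁.reverse.support.tail :=
    r₁.reverse.support_eq_cons
  have hmtail : m ∉ r₁.reverse.support.tail ∧ r₁.reverse.support.tail.Nodup := by
    rw [hhead] at hnodup₁; exact List.nodup_cons.mp hnodup₁
  have htail_sub : ∀ x ∈ r₁.reverse.support.tail, x ∈ r₁.support ∧ x ≠ m := by
    intro x hx
    constructor
    · have : x ∈ r₁.reverse.support := by rw [hhead]; exact List.mem_cons_of_mem _ hx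
      rwa [Walk.support_reverse, List.mem_reverse] at this
    · rintro rfl; exact hmtail.1 hx
  have huv : H.dist u v = H.dist u m + H.dist m v := by
    rw [← aux_path_length hH hp₁, ← aux_path_length hH hp₂, ← hpd,
      ← Walk.length_append, Walk.take_spec]
  have hq : (p₂.reverse.append r₁.reverse).IsPath := by
    rw [Walk.isPath_def, Walk.support_append, List.nodup_append]
    refine ⟨hp₂.reverse.support_nodup, hmtail.2, ?_⟩
    intro x hx y hx' hxy
    subst hxy
    obtain ⟨hxr, hxm⟩ := htail_sub x hx'
    have hxS : x ∈ S := by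
      rw [Walk.support_reverse, List.mem_reverse] at hx
      exact p.support_dropUntil_subset hm hx
    exact hxm (hdisj x hxr hxS)
  have hvw : H.dist v w = H.dist m v + H.dist m w := by
    have h1 := aux_path_length hH hq
    rw [Walk.length_append, Walk.length_reverse, Walk.length_reverse,
      aux_path_length hH hp₂, aux_path_length hH hr₁] at h1
    rw [← h1, H.dist_comm (u := w) (v := m)]
  have huw : H.dist u w = H.dist u m + H.dist m w := by
    have h1 : r.reverse.length = r₁.length + r₂.length := by
      rw [heq, Walk.length_append]
    rw [Walk.length_reverse, hrd, aux_path_length hH hr₁, aux_path_length hH hr₂] at h1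
    rw [h1, H.dist_comm (u := w) (v := m), H.dist_comm (u := m) (v := u)]
    omega
  refine ⟨H.dist u m, H.dist m v, H.dist m w, huv, hvw, huw, ?_⟩
  -- the finset
  refine ⟨p.support.toFinset ∪ r₁.support.toFinset, ?_, ?_, ?_, ?_, ?_⟩
  · simp [p.start_mem_support]
  · simp [p.end_mem_support]
  · simp [r₁.start_mem_support]
  · have hcoe : ((p.support.toFinset ∪ r₁.support.toFinset : Finset W) : Set W)
        = {x | x ∈ p.support} ∪ {x | x ∈ r₁.support} := by
      ext x; simp
    rw [hcoe]
    exact induce_union_connected p.connected_induce_support.preconnected r₁.connected_induce_support.preconnected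
      ⟨m, hm, r₁.end_mem_support⟩
  · have hinter : p.support.toFinset ∩ r₁.support.toFinset = {m} := by
      ext x
      simp only [Finset.mem_inter, List.mem_toFinset, Finset.mem_singleton]
      constructor
      · rintro ⟨h1, h2⟩; exact hdisj x h2 h1
      · rintro rfl; exact ⟨hm, r₁.end_mem_support⟩
    have hcards := Finset.card_union_add_card_inter p.support.toFinset r₁.support.toFinset
    rw [hinter] at hcards
    have c1 : p.support.toFinset.card = p.length + 1 := by
      rw [List.toFinset_card_of_nodup hp.support_nodup, Walk.length_support]
    have c2 : r₁.support.toFinset.card = r₁.length + 1 := by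
      rw [List.toFinset_card_of_nodup hr₁.support_nodup, Walk.length_support]
    have c3 : p.length = H.dist u m + H.dist m v := by rw [hpd]; exact huv
    have c4 : r₁.length = H.dist m w := by
      rw [aux_path_length hH hr₁, H.dist_comm (u := w) (v := m)]
    simp only [Finset.card_singleton] at hcards
    omega

lemma steiner_three [Fintype V] {G : SimpleGraph V} (hG : G.IsTree) (u v w : V) :
    2 * steinerDist G {u, v, w} = G.dist u v + G.dist v w + G.dist u w := by
  classical
  obtain ⟨a, b, c, huv, hvw, huw, t, hut, hvt, hwt, hconn, hcard⟩ := tree_median hG u v w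
  have hmem : (a + b + c) ∈ {m | ∃ S : Finset V, {u, v, w} ⊆ S ∧
      (G.induce (S : Set V)).Connected ∧ S.card = m + 1} :=
    ⟨t, by simp [Finset.insert_subset_iff, hut, hvt, hwt], hconn, hcard⟩
  have hub : steinerDist G {u, v, w} ≤ a + b + c := Nat.sInf_le hmem
  have hlb : a + b + c ≤ steinerDist G {u, v, w} := by
    apply le_csInf ⟨_, hmem⟩
    rintro n ⟨S, hS, hSconn, hScard⟩
    have hu' : u ∈ (S : Set V) := hS (by simp)
    have hv' : v ∈ (S : Set V) := hS (by simp)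
    have hw' : w ∈ (S : Set V) := hS (by simp)
    have hacyc : (G.induce (S : Set V)).IsAcyclic := by
      intro x cyc hcyc
      exact hG.IsAcyclic _
        ((Walk.map_isCycle_iff_of_injective
          (f := (SimpleGraph.Embedding.induce (S : Set V)).toHom)
          Subtype.val_injective).2 hcyc)
    have hStree : (G.induce (S : Set V)).IsTree := ⟨hSconn, hacyc⟩
    obtain ⟨a', b', c', h1, h2, h3, t', _, _, _, _, ht'card⟩ :=
      tree_median hStree ⟨u, hu'⟩ ⟨v, hv'⟩ ⟨w, hw'⟩
    have hcardle : a' + b' + c' + 1 ≤ n + 1 := by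
      rw [← ht'card, ← hScard]
      calc t'.card ≤ Fintype.card ↥(S : Set V) := Finset.card_le_univ t'
        _ = S.card := by
            rw [Fintype.card_congr (Equiv.subtypeEquivRight (fun x => Finset.mem_coe))]
            exact Fintype.card_coe S
    have hdle : ∀ (x y : V) (hx : x ∈ (S : Set V)) (hy : y ∈ (S : Set V)),
        G.dist x y ≤ (G.induce (S : Set V)).dist ⟨x, hx⟩ ⟨y, hy⟩ := by
      intro x y hx hy
      obtain ⟨q, hq⟩ := hSconn.exists_walk_length_eq_dist ⟨x, hx⟩ ⟨y, hy⟩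
      have := SimpleGraph.dist_le (q.map (SimpleGraph.Embedding.induce (S : Set V)).toHom)
      rw [Walk.length_map, hq] at this; exact this
    have e1 := hdle u v hu' hv'
    have e2 := hdle v w hv' hw'
    have e3 := hdle u w hu' hw'
    rw [h1] at e1; rw [h2] at e2; rw [h3] at e3
    omega
  omega

lemma count_pairs_s6 [Fintype V] {x y : V} (hxy : x ≠ y) :
    (((univ : Finset V).powersetCard 3).filter (fun A => x ∈ A ∧ y ∈ A)).card
      = Fintype.card V - 2 := by
  classical
  have hxy2 : ({x, y} : Finset V).card = 2 := by rw [Finset.card_pair hxy]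
  have hmain : (((univ : Finset V).powersetCard 3).filter (fun A => x ∈ A ∧ y ∈ A)).card
      = ((univ \ {x, y}).powersetCard 1).card := by
    refine Finset.card_bij' (fun A _ => A \ {x, y}) (fun B _ => B ∪ {x, y}) ?hi ?hj ?li ?ri
    case hi =>
      intro A hA
      simp only [Finset.mem_filter, Finset.mem_powersetCard_univ] at hA
      obtain ⟨hA3, hxA, hyA⟩ := hA
      have hsub : ({x, y} : Finset V) ⊆ A := by
        simp [Finset.insert_subset_iff, hxA, hyA]
      rw [Finset.mem_powersetCard]
      constructor
      · exact Finset.sdiff_subset_sdiff (Finset.subset_univ A) le_rfl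
      · rw [Finset.card_sdiff_of_subset hsub, hxy2, hA3]
    case hj =>
      intro B hB
      rw [Finset.mem_powersetCard] at hB
      obtain ⟨hBsub, hB1⟩ := hB
      have hdisj : Disjoint B ({x, y} : Finset V) := by
        refine Finset.disjoint_left.mpr ?_
        intro z hz hz'
        exact ((Finset.mem_sdiff.mp (hBsub hz)).2) hz'
      simp only [Finset.mem_filter, Finset.mem_powersetCard_univ]
      refine ⟨?_, ?_, ?_⟩
      · rw [Finset.card_union_of_disjoint hdisj, hB1, hxy2]
      · simp
      · simp
    case li =>
      intro A hA
      simp only [Finset.mem_filter, Finset.mem_powersetCard_univ] at hA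
      obtain ⟨hA3, hxA, hyA⟩ := hA
      have hsub : ({x, y} : Finset V) ⊆ A := by
        simp [Finset.insert_subset_iff, hxA, hyA]
      show A \ {x, y} ∪ {x, y} = A
      rw [Finset.sdiff_union_self_eq_union, Finset.union_eq_left.mpr hsub]
    case ri =>
      intro B hB
      rw [Finset.mem_powersetCard] at hB
      have hdisj : Disjoint B ({x, y} : Finset V) := by
        refine Finset.disjoint_left.mpr ?_
        intro z hz hz'
        exact ((Finset.mem_sdiff.mp (hB.1 hz)).2) hz'
      show (B ∪ {x, y}) \ {x, y} = B
      rw [Finset.union_sdiff_distrib, Finset.sdiff_self, Finset.union_empty,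
        Finset.sdiff_eq_self_of_disjoint hdisj]
  rw [hmain, Finset.card_powersetCard, Nat.choose_one_right, Finset.card_sdiff_of_subset (Finset.subset_univ _),
    hxy2, Finset.card_univ]

lemma sum_offDiag_three [Fintype V] {G : SimpleGraph V} (hG : G.IsTree)
    {A : Finset V} (hA : A.card = 3) :
    ∑ p ∈ A.offDiag, G.dist p.1 p.2 = 4 * steinerDist G A := by
  classical
  obtain ⟨x, y, z, hxy, hxz, hyz, rfl⟩ := Finset.card_eq_three.mp hA
  have hoff : ∑ p ∈ ({x, y, z} : Finset V).offDiag, G.dist p.1 p.2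
      = ∑ p ∈ ({x, y, z} ×ˢ {x, y, z} : Finset (V × V)), G.dist p.1 p.2 := by
    rw [show ({x, y, z} : Finset V).offDiag = (({x, y, z} ×ˢ {x, y, z} : Finset (V × V))).filter (fun a => a.1 ≠ a.2) from by ext p; simp [Finset.mem_offDiag, and_assoc], Finset.sum_filter]
    apply Finset.sum_congr rfl
    intro p _
    by_cases h : p.1 = p.2
    · simp [h, SimpleGraph.dist_self]
    · simp [h]
  rw [hoff, Finset.sum_product]
  have h2 : 2 * steinerDist G {x, y, z} = G.dist x y + G.dist y z + G.dist x z :=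
    steiner_three hG x y z
  simp only [Finset.sum_insert (by simp [hxy, hxz] : x ∉ ({y, z} : Finset V)),
    Finset.sum_insert (by simp [hyz] : y ∉ ({z} : Finset V)),
    Finset.sum_singleton]
  rw [SimpleGraph.dist_self, SimpleGraph.dist_self, SimpleGraph.dist_self,
    G.dist_comm (u := y) (v := x), G.dist_comm (u := z) (v := x), G.dist_comm (u := z) (v := y)]
  omega

theorem main_count [Fintype V] (G : SimpleGraph V) (hG : G.IsTree) :
    4 * steinerWiener G 3
      = (Fintype.card V - 2) * ∑ p ∈ (univ : Finset V).offDiag, G.dist p.1 p.2 := by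
  classical
  have step1 : ∑ A ∈ (univ : Finset V).powersetCard 3, ∑ p ∈ A.offDiag, G.dist p.1 p.2
      = 4 * steinerWiener G 3 := by
    rw [steinerWiener, Finset.mul_sum]
    apply Finset.sum_congr rfl
    intro A hA
    exact sum_offDiag_three hG (Finset.mem_powersetCard_univ.mp hA)
  rw [← step1]
  have hoffd : ∀ A : Finset V, A.offDiag
      = (univ : Finset V).offDiag.filter (fun p => p.1 ∈ A ∧ p.2 ∈ A) := by
    intro A
    ext p
    simp only [Finset.mem_offDiag, Finset.mem_filter, Finset.mem_univ]
    tauto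
  calc ∑ A ∈ (univ : Finset V).powersetCard 3, ∑ p ∈ A.offDiag, G.dist p.1 p.2
      = ∑ A ∈ (univ : Finset V).powersetCard 3, ∑ p ∈ (univ : Finset V).offDiag,
          if p.1 ∈ A ∧ p.2 ∈ A then G.dist p.1 p.2 else 0 := by
        apply Finset.sum_congr rfl
        intro A _
        rw [hoffd A, Finset.sum_filter]
    _ = ∑ p ∈ (univ : Finset V).offDiag, ∑ A ∈ (univ : Finset V).powersetCard 3,
          if p.1 ∈ A ∧ p.2 ∈ A then G.dist p.1 p.2 else 0 := Finset.sum_comm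
    _ = ∑ p ∈ (univ : Finset V).offDiag, (Fintype.card V - 2) * G.dist p.1 p.2 := by
        apply Finset.sum_congr rfl
        intro p hp
        rw [← Finset.sum_filter, Finset.sum_const, smul_eq_mul]
        congr 1
        exact count_pairs_s6 (Finset.mem_offDiag.mp hp).2.2
    _ = (Fintype.card V - 2) * ∑ p ∈ (univ : Finset V).offDiag, G.dist p.1 p.2 := by
        rw [Finset.mul_sum]

end Aux
/-- For every tree on `n ≥ 3` vertices, `2 · SW₃(T) = (n - 2) · W(T)`. -/
theorem stmt6 [Fintype V] (G : SimpleGraph V) (hG : G.IsTree)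
    (hn : 3 ≤ Fintype.card V) :
    2 * (steinerWiener G 3 : ℝ) =
      ((Fintype.card V : ℝ) - 2) * wiener G (fun m => (m : ℝ)) := by
  have h := main_count G hG
  have h2 : (2 : ℕ) ≤ Fintype.card V := by omega
  have hcast : (4 : ℝ) * (steinerWiener G 3 : ℝ)
      = ((Fintype.card V : ℝ) - 2) * ∑ p ∈ (univ : Finset V).offDiag,
          ((G.dist p.1 p.2 : ℕ) : ℝ) := by
    have := congrArg (fun n : ℕ => (n : ℝ)) h
    push_cast [Nat.cast_sub h2] at this
    convert this using 2
  rw [wiener]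
  linarith [hcast]
end

section
/- Let T be a tree that is not a caterpillar, let P = v_0,...,v_d be a longest path, v_j a vertex of P (with j ≥ d/2) having a non-leaf neighbour u not on P, and let T' be the mate of T obtained by detaching all neighbours z of u in the components of T - u not containing P and reattaching them to v_{j+1}. Then every vertex has the same eccentricity in T' as in T; in particular T and T' have the same eccentric sequence. -/
open SimpleGraph Finset

attribute [local instance] Classical.propDecidable

variable {V : Type*}

/-- `mateU G u w`: the set of vertices lying in components of `G - u` not containing
the vertex `w` (a vertex of the longest path): those `x ≠ u` not reachable from `w`
once all edges at `u` are removed. -/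
def mateU (G : SimpleGraph V) (u w : V) : Set V :=
  {x | x ≠ u ∧ ¬ (G.deleteEdges {e : Sym2 V | u ∈ e}).Reachable x w}

/-- The mate of `G` w.r.t. the path vertex `w = v_j`, its successor `w' = v_{j+1}` and
the off-path non-leaf neighbour `u`: each edge `uz` with `z ∈ U` is replaced by `w'z`. -/
def mate (G : SimpleGraph V) (u w w' : V) : SimpleGraph V :=
  (G.deleteEdges {e | ∃ z ∈ mateU G u w, G.Adj u z ∧ e = s(u, z)}) ⊔
    SimpleGraph.fromEdgeSet {e | ∃ z ∈ mateU G u w, G.Adj u z ∧ e = s(w', z)}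

/-- `R`: the vertices of `V - U` in the component of `G - v_j v_{j+1}` containing `v_{j+1}`. -/
def mateR (G : SimpleGraph V) (u vj vj1 : V) : Set V :=
  {x | x ∉ mateU G u vj ∧ (G.deleteEdges {s(vj, vj1)}).Reachable x vj1}


private lemma aux_dist_split {G : SimpleGraph V} {x y c : V} (w : G.Walk x y)
    (hc : c ∈ w.support) : G.dist x c + G.dist c y ≤ w.length := by
  have h1 : G.dist x c ≤ (w.takeUntil c hc).length := SimpleGraph.dist_le _
  have h2 : G.dist c y ≤ (w.dropUntil c hc).length := SimpleGraph.dist_le _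
  have h3 : (w.takeUntil c hc).length + (w.dropUntil c hc).length = w.length := by
    rw [← SimpleGraph.Walk.length_append, w.take_spec hc]
  omega

private lemma aux_cut_dist {G : SimpleGraph V} (hconn : G.Connected) {S : Set V} {c : V}
    (hcS : c ∉ S) (hb : ∀ a b, G.Adj a b → a ∈ S → b ∉ S → b = c) {x y : V}
    (hx : x ∈ S) (hy : y ∉ S) : G.dist x y = G.dist x c + G.dist c y := by
  refine le_antisymm (hconn.dist_triangle) ?_
  obtain ⟨m, hm⟩ := hconn.exists_walk_length_eq_dist x y
  obtain ⟨d, hd, hd1, hd2⟩ := m.exists_boundary_dart S hx hy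
  have hdc : d.snd = c := hb _ _ d.adj hd1 hd2
  have hcsup : c ∈ m.support := hdc ▸ m.dart_snd_mem_support_of_mem_darts hd
  have := aux_dist_split m hcsup
  omega

private lemma aux_not_mem_takeUntil_end {G : SimpleGraph V} {x y s : V} {w : G.Walk x y}
    (hw : w.IsPath) (hs : s ∈ w.support) (hne : s ≠ y) :
    y ∉ (w.takeUntil s hs).support := by
  intro hmem
  have hnd := hw.support_nodup
  rw [← w.take_spec hs, SimpleGraph.Walk.support_append] at hnd
  have hdisj := List.disjoint_of_nodup_append hnd
  have hy2 : y ∈ (w.dropUntil s hs).support.tail := by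
    have h := (w.dropUntil s hs).end_mem_support
    rw [SimpleGraph.Walk.support_eq_cons] at h
    rcases List.mem_cons.mp h with h' | h'
    · exact absurd h'.symm hne
    · exact h'
  exact hdisj hmem hy2

private lemma aux_support_out {G : SimpleGraph V} {S : Set V} {c : V} (hcS : c ∉ S)
    (hb : ∀ a b, G.Adj a b → a ∈ S → b ∉ S → b = c) {x y : V} {w : G.Walk x y}
    (hw : w.IsPath) (hx : x ∉ S) (hy : y ∉ S) : ∀ s ∈ w.support, s ∉ S := by
  intro s hs hsS
  have h1 : c ∈ (w.takeUntil s hs).support := by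
    obtain ⟨d, hd, hd1, hd2⟩ := (w.takeUntil s hs).reverse.exists_boundary_dart S hsS hx
    have hdc : d.snd = c := hb _ _ d.adj hd1 hd2
    have hmem := (w.takeUntil s hs).reverse.dart_snd_mem_support_of_mem_darts hd
    rw [SimpleGraph.Walk.support_reverse, List.mem_reverse] at hmem
    exact hdc ▸ hmem
  have h2 : c ∈ (w.dropUntil s hs).support := by
    obtain ⟨d, hd, hd1, hd2⟩ := (w.dropUntil s hs).exists_boundary_dart S hsS hy
    exact (hb _ _ d.adj hd1 hd2) ▸ (w.dropUntil s hs).dart_snd_mem_support_of_mem_darts hd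
  have h2' : c ∈ (w.dropUntil s hs).support.tail := by
    rw [SimpleGraph.Walk.support_eq_cons] at h2
    rcases List.mem_cons.mp h2 with h' | h'
    · exact absurd (h' ▸ hsS) hcS
    · exact h'
  have hnd := hw.support_nodup
  rw [← w.take_spec hs, SimpleGraph.Walk.support_append] at hnd
  exact (List.disjoint_of_nodup_append hnd) h1 h2'

private lemma aux_support_in {G : SimpleGraph V} {S : Set V} {c : V} (hcS : c ∉ S)
    (hb : ∀ a b, G.Adj a b → a ∈ S → b ∉ S → b = c) {x : V} {w : G.Walk x c}
    (hw : w.IsPath) (hx : x ∈ S) : ∀ s ∈ w.support, s ≠ c → s ∈ S := by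
  intro s hs hsc
  by_contra hsS
  have h1 : c ∈ (w.takeUntil s hs).support := by
    obtain ⟨d, hd, hd1, hd2⟩ := (w.takeUntil s hs).exists_boundary_dart S hx hsS
    exact (hb _ _ d.adj hd1 hd2) ▸ (w.takeUntil s hs).dart_snd_mem_support_of_mem_darts hd
  exact aux_not_mem_takeUntil_end hw hs hsc h1

private lemma aux_transfer {G H : SimpleGraph V} {x y : V} (w : G.Walk x y)
    (h : ∀ a b, s(a, b) ∈ w.edges → H.Adj a b) : ∃ m : H.Walk x y, m.length = w.length := by
  have he : ∀ e ∈ w.edges, e ∈ H.edgeSet := by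
    intro e
    induction e using Sym2.ind with
    | _ a b => exact fun he' => (h a b he')
  exact ⟨w.transfer H he, SimpleGraph.Walk.length_transfer _ _⟩

private lemma aux_chain {G H : SimpleGraph V} {v0 vd : V} (p : G.Walk v0 vd) (a : ℕ) :
    ∀ b, a ≤ b → b ≤ p.length →
      (∀ i, a ≤ i → i < b → H.Adj (p.getVert i) (p.getVert (i + 1))) →
      H.Reachable (p.getVert a) (p.getVert b) := by
  intro b
  induction b with
  | zero =>
    intro h1 _ _
    obtain rfl : a = 0 := by omega
    exact Reachable.refl _
  | succ n ih =>
    intro h1 h2 h3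
    rcases Nat.lt_or_ge a (n + 1) with h | h
    · have ha : a ≤ n := by omega
      exact (ih ha (by omega) (fun i hi1 hi2 => h3 i hi1 (by omega))).trans
        (h3 n ha (by omega)).reachable
    · obtain rfl : a = n + 1 := by omega
      exact Reachable.refl _

/-- If `T` is a tree that is not a caterpillar, `P = v_0,…,v_d` a longest path,
`u` a non-leaf neighbour of `v_j` (`j ≥ d/2`) not on `P`, then every vertex has the
same eccentricity in the mate `T'` as in `T`; in particular `T` and `T'` have the
same eccentric sequence. -/
theorem stmt10 [Fintype V] (G : SimpleGraph V) (hG : G.IsTree)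
    (hNC : ¬ IsCaterpillar G) (v0 vd : V) (p : G.Walk v0 vd) (hp : p.IsPath)
    (hlen : p.length = graphDiam G) (j : ℕ) (hj : graphDiam G ≤ 2 * j)
    (hjlt : j < graphDiam G) (u : V) (hadj : G.Adj (p.getVert j) u)
    (huP : u ∉ p.support) (huNL : ¬ IsLeaf G u) :
    (∀ v : V, ecc (mate G u (p.getVert j) (p.getVert (j + 1))) v = ecc G v) ∧
      sameEccSeq G (mate G u (p.getVert j) (p.getVert (j + 1))) := by
  obtain ⟨hconn, hacyc⟩ := hG
  rw [← hlen] at hj hjlt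
  -- rename the two special path vertices
  obtain ⟨w, hwdef⟩ : ∃ x, p.getVert j = x := ⟨_, rfl⟩
  obtain ⟨w', hw'def⟩ : ∃ x, p.getVert (j + 1) = x := ⟨_, rfl⟩
  rw [hwdef] at hadj ⊢
  rw [hw'def]
  -- basic path/dist facts
  have hstep : ∀ i, i < p.length → G.Adj (p.getVert i) (p.getVert (i + 1)) :=
    fun i hi => p.adj_getVert_succ hi
  have hne_u : ∀ i, i ≤ p.length → p.getVert i ≠ u := by
    intro i hi h
    exact huP (h ▸ (SimpleGraph.Walk.mem_support_iff_exists_getVert.mpr ⟨i, rfl, hi⟩))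
  have hdistle : ∀ a b, a ≤ b → b ≤ p.length →
      G.dist (p.getVert a) (p.getVert b) ≤ b - a := by
    intro a b hab hbl
    induction b with
    | zero =>
      obtain rfl : a = 0 := by omega
      simp [SimpleGraph.dist_self]
    | succ n ih =>
      rcases Nat.lt_or_ge a (n + 1) with h | h
      · have h1 := ih (by omega) (by omega)
        have h2 : G.dist (p.getVert n) (p.getVert (n + 1)) = 1 :=
          SimpleGraph.dist_eq_one_iff_adj.mpr (hstep n (by omega))
        have h3 := hconn.dist_triangle (u := p.getVert a) (v := p.getVert n)
          (w := p.getVert (n + 1))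
        omega
      · obtain rfl : a = n + 1 := by omega
        simp [SimpleGraph.dist_self]
  have hgeo : G.dist v0 vd = p.length := by
    obtain ⟨q, hq, hql⟩ := hconn.exists_path_of_dist v0 vd
    have hpq : (⟨q, hq⟩ : G.Path v0 vd) = ⟨p, hp⟩ := hacyc.path_unique _ _
    have : q = p := congrArg Subtype.val hpq
    rw [← hql, this]
  have hIv0 : ∀ i, i ≤ p.length → G.dist v0 (p.getVert i) = i := by
    intro i hi
    have h1 : G.dist v0 (p.getVert i) ≤ i := by
      have := hdistle 0 i (by omega) hi
      rwa [p.getVert_zero, Nat.sub_zero] at this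
    have h2 : G.dist (p.getVert i) vd ≤ p.length - i := by
      have := hdistle i p.length hi le_rfl
      rwa [p.getVert_length] at this
    have h3 := hconn.dist_triangle (u := v0) (v := p.getVert i) (w := vd)
    omega
  have hIvd : ∀ i, i ≤ p.length → G.dist (p.getVert i) vd = p.length - i := by
    intro i hi
    have h1 : G.dist v0 (p.getVert i) = i := hIv0 i hi
    have h2 : G.dist (p.getVert i) vd ≤ p.length - i := by
      have := hdistle i p.length hi le_rfl
      rwa [p.getVert_length] at this
    have h3 := hconn.dist_triangle (u := v0) (v := p.getVert i) (w := vd)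
    omega
  have hsep : ∀ a b, a ≤ b → b ≤ p.length →
      b - a ≤ G.dist (p.getVert a) (p.getVert b) := by
    intro a b hab hbl
    have h1 := hIv0 b hbl
    have h2 := hIv0 a (le_trans hab hbl)
    have h3 := hconn.dist_triangle (u := v0) (v := p.getVert a) (w := p.getVert b)
    omega
  have hnev : ∀ a b, a < b → b ≤ p.length → p.getVert a ≠ p.getVert b := by
    intro a b h1 h2 he
    have h3 := hsep a b (by omega) h2
    rw [he, SimpleGraph.dist_self] at h3
    omega
  have hgetne : ∀ a b, a ≠ b → a ≤ p.length → b ≤ p.length →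
      p.getVert a ≠ p.getVert b := by
    intro a b h1 h2 h3
    rcases Nat.lt_or_ge a b with h | h
    · exact hnev a b h h3
    · exact (hnev b a (by omega) h2).symm
  have hjle : j ≤ p.length := le_of_lt hjlt
  have hj1le : j + 1 ≤ p.length := hjlt
  -- specific distances
  have hd_v0w : G.dist v0 w = j := by rw [← hwdef]; exact hIv0 j hjle
  have hd_v0w' : G.dist v0 w' = j + 1 := by rw [← hw'def]; exact hIv0 (j + 1) hj1le
  have hd_wvd : G.dist w vd = p.length - j := by rw [← hwdef]; exact hIvd j hjle
  have hd_w'vd : G.dist w' vd = p.length - (j + 1) := by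
    rw [← hw'def]; exact hIvd (j + 1) hj1le
  have hadjww' : G.Adj w w' := by rw [← hwdef, ← hw'def]; exact hstep j hjlt
  have hd_ww' : G.dist w w' = 1 := SimpleGraph.dist_eq_one_iff_adj.mpr hadjww'
  have hd_wu : G.dist w u = 1 := SimpleGraph.dist_eq_one_iff_adj.mpr hadj
  have hwu : w ≠ u := by rw [← hwdef]; exact hne_u j hjle
  have hw'u : w' ≠ u := by rw [← hw'def]; exact hne_u (j + 1) hj1le
  have hv0u : v0 ≠ u := by rw [← p.getVert_zero]; exact hne_u 0 (by omega)
  have hvdu : vd ≠ u := by rw [← p.getVert_length]; exact hne_u p.length le_rfl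
  have hww' : w ≠ w' := by rw [← hwdef, ← hw'def]; exact hnev j (j + 1) (by omega) hj1le
  have hF0 : ∀ x y, G.dist x y ≤ p.length := by
    intro x y
    have h1 : G.dist x y ≤ ecc G x := Finset.le_sup (Finset.mem_univ y)
    have h2 : ecc G x ≤ graphDiam G := Finset.le_sup (Finset.mem_univ x)
    omega
  -- the set U
  set Gd := G.deleteEdges {e : Sym2 V | u ∈ e} with hGddef
  set U := mateU G u w with hUdef
  have hmemU : ∀ x : V, x ∈ U ↔ (x ≠ u ∧ ¬ Gd.Reachable x w) := by
    intro x
    rw [hUdef, hGddef]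
    exact Iff.rfl
  have huU : u ∉ U := fun h => ((hmemU u).mp h).1 rfl
  have hnotU_reach : ∀ {x : V}, x ∉ U → x ≠ u → Gd.Reachable x w := by
    intro x hx hne
    by_contra h
    exact hx ((hmemU x).mpr ⟨hne, h⟩)
  have hGdadj : ∀ i, i < p.length → Gd.Adj (p.getVert i) (p.getVert (i + 1)) := by
    intro i hi
    rw [hGddef, SimpleGraph.deleteEdges_adj]
    refine ⟨hstep i hi, ?_⟩
    simp only [Set.mem_setOf_eq, Sym2.mem_iff]
    rintro (h | h)
    · exact hne_u i (by omega) h.symm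
    · exact hne_u (i + 1) (by omega) h.symm
  have hPnotU : ∀ i, i ≤ p.length → p.getVert i ∉ U := by
    intro i hi hmem
    apply ((hmemU _).mp hmem).2
    rcases le_or_gt i j with h | h
    · have := aux_chain (H := Gd) p i j h hjle (fun k h1 h2 => hGdadj k (by omega))
      rwa [hwdef] at this
    · have := aux_chain (H := Gd) p j i (by omega) hi (fun k h1 h2 => hGdadj k (by omega))
      rw [hwdef] at this
      exact this.symm
  have hwU : w ∉ U := by rw [← hwdef]; exact hPnotU j hjle
  have hw'U : w' ∉ U := by rw [← hw'def]; exact hPnotU (j + 1) hj1le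
  have hv0U : v0 ∉ U := by rw [← p.getVert_zero]; exact hPnotU 0 (by omega)
  have hvdU : vd ∉ U := by rw [← p.getVert_length]; exact hPnotU p.length le_rfl
  have hUboundG : ∀ a b, G.Adj a b → a ∈ U → b ∉ U → b = u := by
    intro a b hab ha hb
    by_contra hbu
    apply ((hmemU a).mp ha).2
    have hGd : Gd.Adj a b := by
      rw [hGddef, SimpleGraph.deleteEdges_adj]
      refine ⟨hab, ?_⟩
      simp only [Set.mem_setOf_eq, Sym2.mem_iff]
      rintro (h | h)
      · exact ((hmemU a).mp ha).1 h.symm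
      · exact hbu h.symm
    exact hGd.reachable.trans (hnotU_reach hb hbu)
  -- the set Sb = U ∪ {u}
  set Sb : Set V := insert u U with hSbdef
  have huSb : u ∈ Sb := Set.mem_insert _ _
  have hUSb : ∀ {x : V}, x ∈ U → x ∈ Sb := fun h => Set.mem_insert_iff.mpr (Or.inr h)
  have hnotSb : ∀ {x : V}, x ≠ u → x ∉ U → x ∉ Sb :=
    fun h1 h2 hmem => (Set.mem_insert_iff.mp hmem).elim h1 h2
  have hwSb : w ∉ Sb := hnotSb hwu hwU
  have hw'Sb : w' ∉ Sb := hnotSb hw'u hw'U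
  have hv0Sb : v0 ∉ Sb := hnotSb hv0u hv0U
  have hvdSb : vd ∉ Sb := hnotSb hvdu hvdU
  have hSbboundG : ∀ a b, G.Adj a b → a ∈ Sb → b ∉ Sb → b = w := by
    intro a b hab ha hb
    have hbu : b ≠ u := fun h => hb (h ▸ huSb)
    have hbU : b ∉ U := fun h => hb (hUSb h)
    rcases Set.mem_insert_iff.mp ha with rfl | haU
    · -- a = u
      by_contra hbw
      have hbridge := (SimpleGraph.isBridge_iff.mp
        ((SimpleGraph.isAcyclic_iff_forall_adj_isBridge.mp hacyc) hab))
      apply hbridge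
      have h1 : (G.deleteEdges {s(a, b)}).Adj a w := by
        rw [SimpleGraph.deleteEdges_adj]
        refine ⟨hadj.symm, ?_⟩
        intro hmem
        rcases Sym2.eq_iff.mp (Set.mem_singleton_iff.mp hmem) with ⟨h1, h2⟩ | ⟨h1, h2⟩
        · exact hbw h2.symm
        · exact hab.ne h1
      have h2 : (G.deleteEdges {s(a, b)}).Reachable b w := by
        refine (hnotU_reach hbU hbu).mono ?_
        rw [hGddef]
        refine SimpleGraph.deleteEdges_anti ?_
        intro e he
        rw [Set.mem_singleton_iff] at he
        subst he
        simp [Sym2.mem_iff]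
      exact h1.reachable.trans h2.symm
    · exact absurd (hUboundG a b hab haU hbU) hbu
  have hcutGU : ∀ x ∈ U, ∀ y ∉ U, G.dist x y = G.dist x u + G.dist u y :=
    fun x hx y hy => aux_cut_dist hconn huU hUboundG hx hy
  have hcutGSb : ∀ x ∈ Sb, ∀ y ∉ Sb, G.dist x y = G.dist x w + G.dist w y :=
    fun x hx y hy => aux_cut_dist hconn hwSb hSbboundG hx hy
  have hduv0 : G.dist u v0 = j + 1 := by
    have h1 := hcutGSb u huSb v0 hv0Sb
    have h2 : G.dist u w = 1 := by rw [SimpleGraph.dist_comm]; exact hd_wu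
    have h3 : G.dist w v0 = j := by rw [SimpleGraph.dist_comm]; exact hd_v0w
    omega
  have hMbd : ∀ y ∈ U, G.dist y u + (j + 1) ≤ p.length := by
    intro y hy
    have h1 : G.dist y v0 = G.dist y u + G.dist u v0 := hcutGU y hy v0 hv0U
    have h2 := hF0 y v0
    omega
  -- the mate graph M
  set M := mate G u w w' with hMdef
  have hMadj : ∀ a b : V, M.Adj a b ↔
      ((G.Adj a b ∧ ¬ ∃ z ∈ U, G.Adj u z ∧ s(a, b) = s(u, z)) ∨
        ((∃ z ∈ U, G.Adj u z ∧ s(a, b) = s(w', z)) ∧ a ≠ b)) := by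
    intro a b
    rw [hMdef, hUdef]
    simp only [mate, SimpleGraph.sup_adj, SimpleGraph.deleteEdges_adj,
      SimpleGraph.fromEdgeSet_adj, Set.mem_setOf_eq]
  have hGM : ∀ {a b : V}, G.Adj a b → ((a ∉ U ∧ b ∉ U) ∨ (a ≠ u ∧ b ≠ u)) → M.Adj a b := by
    intro a b hab h
    rw [hMadj a b]
    left
    refine ⟨hab, ?_⟩
    rintro ⟨z, hz, hz2, heq⟩
    rcases Sym2.eq_iff.mp heq with ⟨h1, h2⟩ | ⟨h1, h2⟩
    · rcases h with ⟨ha, hb⟩ | ⟨ha, hb⟩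
      · exact hb (h2 ▸ hz)
      · exact ha h1
    · rcases h with ⟨ha, hb⟩ | ⟨ha, hb⟩
      · exact ha (h1 ▸ hz)
      · exact hb h2
  have hMnew : ∀ {z : V}, z ∈ U → G.Adj u z → M.Adj w' z := by
    intro z hz hadj'
    rw [hMadj w' z]
    right
    exact ⟨⟨z, hz, hadj', rfl⟩, fun h => hw'U (h ▸ hz)⟩
  have hMG : ∀ {a b : V}, M.Adj a b → a ≠ w' → b ≠ w' → G.Adj a b := by
    intro a b h ha hb
    rcases (hMadj a b).mp h with ⟨hGab, -⟩ | ⟨⟨z₀, hz₀, hz₀a, heq⟩, -⟩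
    · exact hGab
    · rcases Sym2.eq_iff.mp heq with ⟨h1, -⟩ | ⟨-, h2⟩
      · exact absurd h1 ha
      · exact absurd h2 hb
  have hMGU : ∀ {a b : V}, M.Adj a b → a ∈ U → b ∈ U → G.Adj a b := by
    intro a b h ha hb
    rcases (hMadj a b).mp h with ⟨hGab, -⟩ | ⟨⟨z₀, hz₀, hz₀a, heq⟩, -⟩
    · exact hGab
    · rcases Sym2.eq_iff.mp heq with ⟨h1, -⟩ | ⟨-, h2⟩
      · exact absurd (h1 ▸ ha) hw'U
      · exact absurd (h2 ▸ hb) hw'U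
  have hMGout : ∀ {a b : V}, M.Adj a b → a ∉ U → b ∉ U → G.Adj a b := by
    intro a b h ha hb
    rcases (hMadj a b).mp h with ⟨hGab, -⟩ | ⟨⟨z₀, hz₀, hz₀a, heq⟩, -⟩
    · exact hGab
    · rcases Sym2.eq_iff.mp heq with ⟨-, h2⟩ | ⟨h1, -⟩
      · exact absurd (h2 ▸ hz₀) hb
      · exact absurd (h1 ▸ hz₀) ha
  have hUboundM : ∀ a b, M.Adj a b → a ∈ U → b ∉ U → b = w' := by
    intro a b h ha hb
    by_contra hbw'
    have haw' : a ≠ w' := fun h' => hw'U (h' ▸ ha)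
    have hGab : G.Adj a b := hMG h haw' hbw'
    have hbu : b = u := hUboundG a b hGab ha hb
    subst hbu
    rcases (hMadj a b).mp h with ⟨hG', hnd⟩ | ⟨⟨z₀, hz₀, hz₀a, heq⟩, -⟩
    · exact hnd ⟨a, ha, hG'.symm, Sym2.eq_swap⟩
    · rcases Sym2.eq_iff.mp heq with ⟨h1, -⟩ | ⟨-, h2⟩
      · exact haw' h1
      · exact hw'u h2.symm
  -- transfer: M-walk from w' into U
  have hconstr : ∀ x ∈ U, ∃ m : M.Walk w' x, m.length = G.dist x u := by
    intro x hx
    have hxu : x ≠ u := ((hmemU x).mp hx).1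
    obtain ⟨q, hq, hql⟩ := hconn.exists_path_of_dist x u
    have hsupq : ∀ s ∈ q.support, s ≠ u → s ∈ U := aux_support_in huU hUboundG hq hx
    obtain ⟨z, hz, r, hre⟩ := SimpleGraph.Walk.exists_eq_cons_of_ne (Ne.symm hxu) q.reverse
    have hqr : q.reverse.IsPath := hq.reverse
    rw [hre, SimpleGraph.Walk.cons_isPath_iff] at hqr
    have hrsub : ∀ s ∈ r.support, s ∈ U := by
      intro s hs
      have hs' : s ∈ q.support := by
        have : s ∈ q.reverse.support := by
          rw [hre, SimpleGraph.Walk.support_cons]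
          exact List.mem_cons_of_mem _ hs
        rwa [SimpleGraph.Walk.support_reverse, List.mem_reverse] at this
      exact hsupq s hs' (fun h => hqr.2 (h ▸ hs))
    have hzU : z ∈ U := hrsub z r.start_mem_support
    obtain ⟨r', hr'⟩ := aux_transfer r (fun a b hab =>
      hGM (r.adj_of_mem_edges hab)
        (Or.inr ⟨fun h => hqr.2 (h ▸ r.fst_mem_support_of_mem_edges hab),
          fun h => hqr.2 (h ▸ r.snd_mem_support_of_mem_edges hab)⟩))
    refine ⟨SimpleGraph.Walk.cons (hMnew hzU hz) r', ?_⟩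
    have hl1 : q.reverse.length = r.length + 1 := by
      rw [hre, SimpleGraph.Walk.length_cons]
    have hl2 : q.reverse.length = q.length := q.length_reverse
    simp only [SimpleGraph.Walk.length_cons, hr']
    omega
  have hreachMU : ∀ x ∈ U, M.Reachable w' x := fun x hx => by
    obtain ⟨m, -⟩ := hconstr x hx
    exact ⟨m⟩
  have hle1 : ∀ x ∈ U, M.dist w' x ≤ G.dist x u := by
    intro x hx
    obtain ⟨m, hm⟩ := hconstr x hx
    exact hm ▸ SimpleGraph.dist_le m
  have houtreach : ∀ a, a ∉ U → M.Reachable a w := by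
    intro a ha
    obtain ⟨q, hq, -⟩ := hconn.exists_path_of_dist a w
    have hsup := aux_support_out huU hUboundG hq ha hwU
    obtain ⟨m, -⟩ := aux_transfer q (fun a' b' he =>
      hGM (q.adj_of_mem_edges he)
        (Or.inl ⟨hsup _ (q.fst_mem_support_of_mem_edges he),
          hsup _ (q.snd_mem_support_of_mem_edges he)⟩))
    exact ⟨m⟩
  have hMconn : M.Connected := by
    have hall : ∀ a, M.Reachable a w := by
      intro a
      by_cases ha : a ∈ U
      · exact ((hreachMU a ha).symm).trans (houtreach w' hw'U)
      · exact houtreach a ha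
    have hne : Nonempty V := ⟨u⟩
    exact ⟨fun a b => (hall a).trans (hall b).symm⟩
  have htr2 : ∀ x ∈ U, M.dist x w' = G.dist x u := by
    intro x hx
    refine le_antisymm ?_ ?_
    · rw [SimpleGraph.dist_comm]
      exact hle1 x hx
    · obtain ⟨m, hm, hml⟩ := hMconn.exists_path_of_dist x w'
      have hsupm : ∀ s ∈ m.support, s ≠ w' → s ∈ U := aux_support_in hw'U hUboundM hm hx
      have hxw' : x ≠ w' := fun h => hw'U (h ▸ hx)
      obtain ⟨z, hz, r, hre⟩ := SimpleGraph.Walk.exists_eq_cons_of_ne (Ne.symm hxw') m.reverse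
      have hmr : m.reverse.IsPath := hm.reverse
      rw [hre, SimpleGraph.Walk.cons_isPath_iff] at hmr
      have hrsub : ∀ s ∈ r.support, s ∈ U := by
        intro s hs
        have hs' : s ∈ m.support := by
          have : s ∈ m.reverse.support := by
            rw [hre, SimpleGraph.Walk.support_cons]
            exact List.mem_cons_of_mem _ hs
          rwa [SimpleGraph.Walk.support_reverse, List.mem_reverse] at this
        exact hsupm s hs' (fun h => hmr.2 (h ▸ hs))
      have hzU : z ∈ U := hrsub z r.start_mem_support
      have hGuz : G.Adj u z := by
        rcases (hMadj w' z).mp hz with ⟨hGab, -⟩ | ⟨⟨z₀, hz₀U, hz₀adj, heq⟩, -⟩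
        · exact absurd (hUboundG z w' hGab.symm hzU hw'U) hw'u
        · rcases Sym2.eq_iff.mp heq with ⟨-, h2⟩ | ⟨h1, -⟩
          · rw [h2]; exact hz₀adj
          · exact absurd (h1 ▸ hz₀U) hw'U
      obtain ⟨r', hr'⟩ := aux_transfer r (fun a b hab =>
        hMGU (r.adj_of_mem_edges hab) (hrsub _ (r.fst_mem_support_of_mem_edges hab))
          (hrsub _ (r.snd_mem_support_of_mem_edges hab)))
      have h1 : G.dist u x ≤ (SimpleGraph.Walk.cons hGuz r').length := SimpleGraph.dist_le _
      rw [SimpleGraph.Walk.length_cons] at h1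
      have hl1 : m.reverse.length = r.length + 1 := by
        rw [hre, SimpleGraph.Walk.length_cons]
      have hl2 : m.reverse.length = m.length := m.length_reverse
      have h2 : G.dist x u = G.dist u x := SimpleGraph.dist_comm
      omega
  have htr1 : ∀ x ∉ U, ∀ y ∉ U, M.dist x y = G.dist x y := by
    intro x hx y hy
    refine le_antisymm ?_ ?_
    · obtain ⟨q, hq, hql⟩ := hconn.exists_path_of_dist x y
      have hsup := aux_support_out huU hUboundG hq hx hy
      obtain ⟨m, hm⟩ := aux_transfer q (fun a b he =>
        hGM (q.adj_of_mem_edges he)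
          (Or.inl ⟨hsup _ (q.fst_mem_support_of_mem_edges he),
            hsup _ (q.snd_mem_support_of_mem_edges he)⟩))
      have := SimpleGraph.dist_le m
      omega
    · obtain ⟨q, hq, hql⟩ := hMconn.exists_path_of_dist x y
      have hsup := aux_support_out hw'U hUboundM hq hx hy
      obtain ⟨m, hm⟩ := aux_transfer q (fun a b he =>
        hMGout (q.adj_of_mem_edges he) (hsup _ (q.fst_mem_support_of_mem_edges he))
          (hsup _ (q.snd_mem_support_of_mem_edges he)))
      have := SimpleGraph.dist_le m
      omega
  have hcutMU : ∀ x ∈ U, ∀ y ∉ U, M.dist x y = M.dist x w' + M.dist w' y :=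
    fun x hx y hy => aux_cut_dist hMconn hw'U hUboundM hx hy
  -- the bridge w-w' and its two sides
  set Gj := G.deleteEdges {s(w, w')} with hGjdef
  set A : Set V := {x | Gj.Reachable x w} with hAdef
  set B : Set V := {x | Gj.Reachable x w'} with hBdef
  have hbr' : ¬ Gj.Reachable w w' := by
    have hbridge := (SimpleGraph.isBridge_iff.mp
      ((SimpleGraph.isAcyclic_iff_forall_adj_isBridge.mp hacyc) hadjww'))
    rw [hGjdef]
    exact hbridge
  have hmemA : ∀ x : V, x ∈ A ↔ Gj.Reachable x w := fun x => Iff.rfl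
  have hmemB : ∀ x : V, x ∈ B ↔ Gj.Reachable x w' := fun x => Iff.rfl
  have hdisjAB : ∀ x, x ∈ A → x ∈ B → False := by
    intro x h1 h2
    exact hbr' (((hmemA x).mp h1).symm.trans ((hmemB x).mp h2))
  have hwA : w ∈ A := (hmemA w).mpr (SimpleGraph.Reachable.refl _)
  have hw'B : w' ∈ B := (hmemB w').mpr (SimpleGraph.Reachable.refl _)
  have hwB : w ∉ B := fun h => hbr' ((hmemB w).mp h)
  have hw'A : w' ∉ A := fun h => hbr' ((hmemA w').mp h).symm
  have hGjadj : ∀ a b : V, G.Adj a b → s(a, b) ≠ s(w, w') → Gj.Adj a b := by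
    intro a b h1 h2
    rw [hGjdef, SimpleGraph.deleteEdges_adj]
    exact ⟨h1, fun hmem => h2 (Set.mem_singleton_iff.mp hmem)⟩
  have hcover : ∀ x, x ∈ A ∨ x ∈ B := by
    intro x
    obtain ⟨q, hq, -⟩ := hconn.exists_path_of_dist x w
    by_cases he : s(w, w') ∈ q.edges
    · right
      have hw'sup : w' ∈ q.support := q.snd_mem_support_of_mem_edges he
      have hnw : w ∉ (q.takeUntil w' hw'sup).support :=
        aux_not_mem_takeUntil_end hq hw'sup (Ne.symm hww')
      obtain ⟨m, -⟩ := aux_transfer (q.takeUntil w' hw'sup) (fun a b hab => by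
        refine hGjadj a b ((q.takeUntil w' hw'sup).adj_of_mem_edges hab) ?_
        intro heq
        rcases Sym2.eq_iff.mp heq with ⟨h1, -⟩ | ⟨-, h2⟩
        · exact hnw (h1 ▸ (q.takeUntil w' hw'sup).fst_mem_support_of_mem_edges hab)
        · exact hnw (h2 ▸ (q.takeUntil w' hw'sup).snd_mem_support_of_mem_edges hab))
      exact (hmemB x).mpr ⟨m⟩
    · left
      obtain ⟨m, -⟩ := aux_transfer q (fun a b hab =>
        hGjadj a b (q.adj_of_mem_edges hab) (fun heq => he (heq ▸ hab)))
      exact (hmemA x).mpr ⟨m⟩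
  have hboundB : ∀ a b, G.Adj a b → a ∈ B → b ∉ B → b = w := by
    intro a b hab ha hb
    by_cases he : s(a, b) = s(w, w')
    · rcases Sym2.eq_iff.mp he with ⟨h1, h2⟩ | ⟨h1, h2⟩
      · exact absurd (h2 ▸ hw'B) hb
      · exact h2
    · exact absurd ((hmemB b).mpr (((hGjadj a b hab he).symm.reachable).trans
        ((hmemB a).mp ha))) hb
  have hboundA : ∀ a b, G.Adj a b → a ∈ A → b ∉ A → b = w' := by
    intro a b hab ha hb
    by_cases he : s(a, b) = s(w, w')
    · rcases Sym2.eq_iff.mp he with ⟨h1, h2⟩ | ⟨h1, h2⟩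
      · exact h2
      · exact absurd (h1 ▸ ha) hw'A
    · exact absurd ((hmemA b).mpr (((hGjadj a b hab he).symm.reachable).trans
        ((hmemA a).mp ha))) hb
  have hGjstep : ∀ i, i < p.length → i ≠ j → Gj.Adj (p.getVert i) (p.getVert (i + 1)) := by
    intro i h1 h2
    refine hGjadj _ _ (hstep i h1) ?_
    rw [← hwdef, ← hw'def]
    intro heq
    rcases Sym2.eq_iff.mp heq with ⟨ha, hb⟩ | ⟨ha, hb⟩
    · exact hgetne i j h2 (by omega) hjle ha
    · rcases Nat.lt_or_ge i (j + 1) with hc | hc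
      · exact hgetne i (j + 1) (by omega) (by omega) hj1le ha
      · exact hgetne (i + 1) j (by omega) (by omega) hjle hb
  have hv0A : v0 ∈ A := by
    have := aux_chain (H := Gj) p 0 j (by omega) hjle
      (fun i h1 h2 => hGjstep i (by omega) (by omega))
    rw [p.getVert_zero, hwdef] at this
    exact (hmemA v0).mpr this
  have hvdB : vd ∈ B := by
    have := aux_chain (H := Gj) p (j + 1) p.length hj1le le_rfl
      (fun i h1 h2 => hGjstep i (by omega) (by omega))
    rw [p.getVert_length, hw'def] at this
    exact (hmemB vd).mpr this.symm
  have hv0B : v0 ∉ B := fun h => hdisjAB v0 hv0A h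
  have hvdA : vd ∉ A := fun h => hdisjAB vd h hvdB
  -- global bounds
  have hw'all : ∀ y, G.dist w' y ≤ j + 1 := by
    intro y
    have hc : G.dist w' y = G.dist y w' := SimpleGraph.dist_comm
    rcases hcover y with hy | hy
    · have h1 : G.dist y vd = G.dist y w' + G.dist w' vd :=
        aux_cut_dist hconn hw'A hboundA hy hvdA
      have h2 := hF0 y vd
      omega
    · have h1 : G.dist y v0 = G.dist y w + G.dist w v0 :=
        aux_cut_dist hconn hwB hboundB hy hv0B
      have h2 : G.dist w v0 = j := by rw [SimpleGraph.dist_comm]; exact hd_v0w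
      have h3 := hF0 y v0
      have h4 : G.dist w' y ≤ G.dist w' w + G.dist w y := hconn.dist_triangle
      have h5 : G.dist w' w = 1 := by rw [SimpleGraph.dist_comm]; exact hd_ww'
      have h6 : G.dist w y = G.dist y w := SimpleGraph.dist_comm
      omega
  have hwall : ∀ y, G.dist w y ≤ j := by
    intro y
    rcases hcover y with hy | hy
    · have h1 : G.dist w' y = G.dist w' w + G.dist w y :=
        aux_cut_dist hconn hwB hboundB hw'B (fun h => hdisjAB y hy h)
      have h2 := hw'all y
      have h2' : G.dist w' w = 1 := by rw [SimpleGraph.dist_comm]; exact hd_ww'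
      omega
    · have h1 : G.dist y v0 = G.dist y w + G.dist w v0 :=
        aux_cut_dist hconn hwB hboundB hy hv0B
      have h2 : G.dist w v0 = j := by rw [SimpleGraph.dist_comm]; exact hd_v0w
      have h3 := hF0 y v0
      have h4 : G.dist w y = G.dist y w := SimpleGraph.dist_comm
      omega
  -- the key pointwise eccentricity equality
  have key : ∀ v, ecc M v = ecc G v := by
    intro v
    unfold ecc
    have hGs : ∀ z, G.dist v z ≤ Finset.univ.sup fun t => G.dist v t :=
      fun z => Finset.le_sup (Finset.mem_univ z)
    have hMs : ∀ z, M.dist v z ≤ Finset.univ.sup fun t => M.dist v t :=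
      fun z => Finset.le_sup (Finset.mem_univ z)
    refine le_antisymm (Finset.sup_le fun y _ => ?_) (Finset.sup_le fun y _ => ?_)
    · -- M.dist v y ≤ sup of G.dist v
      by_cases hvU : v ∈ U <;> by_cases hyU : y ∈ U
      · -- both in U
        have h1 : M.dist v y ≤ M.dist v w' + M.dist w' y := hMconn.dist_triangle
        have h2 : M.dist v w' = G.dist v u := htr2 v hvU
        have h3 : M.dist w' y = G.dist y u := by
          rw [SimpleGraph.dist_comm]; exact htr2 y hyU
        have h4 := hMbd y hyU
        have h5 : G.dist v v0 = G.dist v u + G.dist u v0 := hcutGU v hvU v0 hv0U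
        have h6 := hGs v0
        omega
      · -- v ∈ U, y ∉ U
        have h1 : M.dist v y = M.dist v w' + M.dist w' y := hcutMU v hvU y hyU
        have h2 : M.dist v w' = G.dist v u := htr2 v hvU
        have h3 : M.dist w' y = G.dist w' y := htr1 w' hw'U y hyU
        have h4 := hw'all y
        have h5 : G.dist v v0 = G.dist v u + G.dist u v0 := hcutGU v hvU v0 hv0U
        have h6 := hGs v0
        omega
      · -- v ∉ U, y ∈ U
        have h1 : M.dist v y = M.dist y w' + M.dist w' v := by
          rw [SimpleGraph.dist_comm]; exact hcutMU y hyU v hvU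
        have h2 : M.dist y w' = G.dist y u := htr2 y hyU
        have h3 : M.dist w' v = G.dist w' v := htr1 w' hw'U v hvU
        have h4 := hMbd y hyU
        rcases hcover v with hvA | hvB
        · have h5 : G.dist v vd = G.dist v w' + G.dist w' vd :=
            aux_cut_dist hconn hw'A hboundA hvA hvdA
          have h6 : G.dist v w' = G.dist w' v := SimpleGraph.dist_comm
          have h7 := hGs vd
          omega
        · have h5 : G.dist v v0 = G.dist v w + G.dist w v0 :=
            aux_cut_dist hconn hwB hboundB hvB hv0B
          have h6 : G.dist w v0 = j := by rw [SimpleGraph.dist_comm]; exact hd_v0w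
          have h7 : G.dist w v = G.dist w w' + G.dist w' v :=
            aux_cut_dist hconn hw'A hboundA hwA (fun h => hdisjAB v h hvB)
          have h8 : G.dist v w = G.dist w v := SimpleGraph.dist_comm
          have h9 := hGs v0
          omega
      · -- both outside U
        rw [htr1 v hvU y hyU]
        exact hGs y
    · -- G.dist v y ≤ sup of M.dist v
      by_cases hvU : v ∈ U <;> by_cases hyU : y ∈ U
      · -- both in U
        have h1 : G.dist v y ≤ G.dist v u + G.dist u y := hconn.dist_triangle
        have h2 : G.dist u y = G.dist y u := SimpleGraph.dist_comm
        have h3 := hMbd y hyU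
        have h4 : M.dist v v0 = M.dist v w' + M.dist w' v0 := hcutMU v hvU v0 hv0U
        have h5 : M.dist v w' = G.dist v u := htr2 v hvU
        have h6 : M.dist w' v0 = G.dist w' v0 := htr1 w' hw'U v0 hv0U
        have h7 : G.dist w' v0 = j + 1 := by rw [SimpleGraph.dist_comm]; exact hd_v0w'
        have h8 := hMs v0
        omega
      · -- v ∈ U, y ∉ U
        have h1 : G.dist v y = G.dist v u + G.dist u y := hcutGU v hvU y hyU
        have h2 : G.dist u y ≤ j + 1 := by
          by_cases hyu : y = u
          · rw [hyu]
            simp [SimpleGraph.dist_self]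
          · have hySb : y ∉ Sb := hnotSb hyu hyU
            have h3 := hcutGSb u huSb y hySb
            have h4 : G.dist u w = 1 := by rw [SimpleGraph.dist_comm]; exact hd_wu
            have h5 := hwall y
            omega
        have h4 : M.dist v v0 = M.dist v w' + M.dist w' v0 := hcutMU v hvU v0 hv0U
        have h5 : M.dist v w' = G.dist v u := htr2 v hvU
        have h6 : M.dist w' v0 = G.dist w' v0 := htr1 w' hw'U v0 hv0U
        have h7 : G.dist w' v0 = j + 1 := by rw [SimpleGraph.dist_comm]; exact hd_v0w'
        have h8 := hMs v0
        omega
      · -- v ∉ U, y ∈ U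
        by_cases hvu : v = u
        · have h1 : G.dist v y = G.dist y u := by rw [hvu, SimpleGraph.dist_comm]
          have h2 := hMbd y hyU
          have h3 : M.dist v v0 = G.dist v v0 := htr1 v hvU v0 hv0U
          have h3' : G.dist v v0 = j + 1 := by rw [hvu]; exact hduv0
          have h4 := hMs v0
          omega
        · have hvSb : v ∉ Sb := hnotSb hvu hvU
          have h1 : G.dist y v = G.dist y w + G.dist w v := hcutGSb y (hUSb hyU) v hvSb
          have h1' : G.dist v y = G.dist y v := SimpleGraph.dist_comm
          have h2 : G.dist y w = G.dist y u + G.dist u w := hcutGU y hyU w hwU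
          have h2' : G.dist u w = 1 := by rw [SimpleGraph.dist_comm]; exact hd_wu
          have h3 := hMbd y hyU
          rcases hcover v with hvA | hvB
          · have h4 : M.dist v vd = G.dist v vd := htr1 v hvU vd hvdU
            have h5 : G.dist v vd = G.dist v w' + G.dist w' vd :=
              aux_cut_dist hconn hw'A hboundA hvA hvdA
            have h6 : G.dist w' v = G.dist w' w + G.dist w v :=
              aux_cut_dist hconn hwB hboundB hw'B (fun h => hdisjAB v hvA h)
            have h6' : G.dist w' w = 1 := by rw [SimpleGraph.dist_comm]; exact hd_ww'
            have h6'' : G.dist v w' = G.dist w' v := SimpleGraph.dist_comm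
            have h7 := hMs vd
            omega
          · have h4 : M.dist v v0 = G.dist v v0 := htr1 v hvU v0 hv0U
            have h5 : G.dist v v0 = G.dist v w + G.dist w v0 :=
              aux_cut_dist hconn hwB hboundB hvB hv0B
            have h5' : G.dist w v0 = j := by rw [SimpleGraph.dist_comm]; exact hd_v0w
            have h6 : G.dist w v = G.dist w w' + G.dist w' v :=
              aux_cut_dist hconn hw'A hboundA hwA (fun h => hdisjAB v h hvB)
            have h6' : G.dist v w = G.dist w v := SimpleGraph.dist_comm
            have h7 := hMs v0
            omega
      · -- both outside U
        rw [← htr1 v hvU y hyU]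
        exact hMs y
  refine ⟨key, ?_⟩
  intro k
  exact Nat.card_congr (Equiv.subtypeEquivRight fun v => by rw [key v])
end

section
/- With the notation of the mate construction: for all vertices a, b of T, the distances in T and in its mate T' satisfy d_{T'}(a,b) = d_T(a,b) - 2 if a ∈ U and b ∈ R; d_{T'}(a,b) = d_T(a,b) + 2 if a ∈ U and b = u; and d_{T'}(a,b) = d_T(a,b) in all other cases (up to symmetry in a,b). -/
open SimpleGraph Finset

attribute [local instance] Classical.propDecidable

variable {V : Type*}

namespace MateAux
open SimpleGraph Walk

variable {G : SimpleGraph V} {u w w' x y : V}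

lemma U_adj {x y : V} (hx : x ∈ mateU G u w) (hxy : G.Adj x y) (hy : y ≠ u) :
    y ∈ mateU G u w := by
  refine ⟨hy, fun hr => hx.2 (Reachable.trans ?_ hr)⟩
  refine Adj.reachable ?_
  rw [deleteEdges_adj]
  refine ⟨hxy, ?_⟩
  simp only [Set.mem_setOf_eq, Sym2.mem_iff, not_or]
  exact ⟨fun h => hx.1 h.symm, fun h => hy h.symm⟩

lemma U_walk {x t : V} (W : G.Walk x t) :
    x ∈ mateU G u w → u ∉ W.support → t ∈ mateU G u w := by
  induction W with
  | nil => exact fun h _ => h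
  | cons h q ih =>
    intro hx hu
    simp only [Walk.support_cons, List.mem_cons, not_or] at hu
    exact ih (U_adj hx h fun he => hu.2 (he ▸ q.start_mem_support)) hu.2

lemma u_not_mem : u ∉ mateU G u w := fun h => h.1 rfl

lemma w_not_mem : w ∉ mateU G u w := fun h => h.2 (Reachable.refl w)

lemma w'_not_mem (hww : G.Adj w w') (huw : u ≠ w) (huw' : u ≠ w') : w' ∉ mateU G u w := by
  intro h
  refine h.2 (Adj.reachable ?_)
  rw [deleteEdges_adj]
  refine ⟨hww.symm, ?_⟩
  simp only [Set.mem_setOf_eq, Sym2.mem_iff, not_or]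
  exact ⟨huw', huw⟩

lemma bridge (hG : G.IsTree) {x y : V} (hxy : G.Adj x y) :
    ¬ (G.deleteEdges {s(x, y)}).Reachable x y := by
  have hb := (isAcyclic_iff_forall_edge_isBridge.mp hG.2) (G.mem_edgeSet.mpr hxy)
  exact isBridge_iff.mp hb

lemma nbr_eq (hG : G.IsTree) (hwu : G.Adj w u) {y : V} (hy : G.Adj u y)
    (hyU : y ∉ mateU G u w) : y = w := by
  by_contra hne
  have hyu : y ≠ u := hy.ne'
  have hr : (G.deleteEdges {e : Sym2 V | u ∈ e}).Reachable y w := by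
    by_contra hr; exact hyU ⟨hyu, hr⟩
  have hle : G.deleteEdges {e : Sym2 V | u ∈ e} ≤ G.deleteEdges {s(u, w)} := by
    intro a b hab
    rw [deleteEdges_adj] at hab ⊢
    refine ⟨hab.1, ?_⟩
    intro h
    rw [Set.mem_singleton_iff] at h
    exact hab.2 (by rw [h]; simp)
  have h1 : (G.deleteEdges {s(u, w)}).Adj u y := by
    rw [deleteEdges_adj]
    refine ⟨hy, ?_⟩
    rw [Set.mem_singleton_iff, Sym2.eq_iff]
    rintro (⟨-, rfl⟩ | ⟨rfl, -⟩)
    · exact hne rfl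
    · exact hwu.ne' rfl
  exact bridge hG hwu.symm (h1.reachable.trans (hr.mono hle))

lemma exists_path_dist (hc : G.Connected) (a b : V) :
    ∃ P : G.Walk a b, P.IsPath ∧ P.length = G.dist a b := by
  obtain ⟨W, hW⟩ := hc.exists_walk_length_eq_dist a b
  exact ⟨W.bypass, W.bypass_isPath,
    le_antisymm (le_trans W.length_bypass_le hW.le) (dist_le _)⟩

lemma dist_split (hc : G.Connected) {a t : V} (ha : a ∈ mateU G u w)
    (ht : t ∉ mateU G u w) : G.dist a t = G.dist a u + G.dist u t := by
  refine le_antisymm (hc.dist_triangle) ?_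
  obtain ⟨W, hW⟩ := hc.exists_walk_length_eq_dist a t
  have hu : u ∈ W.support := by
    by_contra h; exact ht (U_walk W ha h)
  have hsplit := congrArg Walk.length (W.take_spec hu)
  rw [Walk.length_append] at hsplit
  have h1 := dist_le (W.takeUntil u hu)
  have h2 := dist_le (W.dropUntil u hu)
  omega

lemma dist_from_u (hG : G.IsTree) (hwu : G.Adj w u) {t : V} (ht : t ∉ mateU G u w)
    (htu : t ≠ u) : G.dist u t = 1 + G.dist w t := by
  have hc := hG.1
  refine le_antisymm ?_ ?_
  · have := hc.dist_triangle (u := u) (v := w) (w := t)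
    rwa [dist_eq_one_iff_adj.mpr hwu.symm] at this
  · obtain ⟨P, hP, hlen⟩ := exists_path_dist hc u t
    obtain ⟨y, hy, Q, rfl⟩ := Walk.exists_eq_cons_of_ne (Ne.symm htu) P
    rw [Walk.cons_isPath_iff] at hP
    have hyU : y ∉ mateU G u w := by
      intro hyU'
      by_cases h : u ∈ Q.support
      · exact hP.2 h
      · exact ht (U_walk Q hyU' h)
    have hyw : y = w := nbr_eq hG hwu hy hyU
    subst hyw
    have := dist_le Q
    rw [Walk.length_cons] at hlen
    omega

lemma dist_cut (hc : G.Connected) {x y t : V} (hxy : G.Adj x y)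
    (ht : ¬ (G.deleteEdges {s(x, y)}).Reachable y t) :
    G.dist y t = 1 + G.dist x t := by
  have hty : t ≠ y := fun h => ht (by subst h; exact Reachable.refl _)
  refine le_antisymm ?_ ?_
  · have := hc.dist_triangle (u := y) (v := x) (w := t)
    rwa [dist_eq_one_iff_adj.mpr hxy.symm] at this
  · obtain ⟨P, hP, hlen⟩ := exists_path_dist hc y t
    obtain ⟨z, hz, Q, rfl⟩ := Walk.exists_eq_cons_of_ne (Ne.symm hty) P
    have hedge : s(x, y) ∈ (Walk.cons hz Q).edges := by
      by_contra h
      refine ht ⟨(Walk.cons hz Q).transfer _ fun e he => ?_⟩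
      rw [edgeSet_deleteEdges]
      refine ⟨Walk.edges_subset_edgeSet _ he, ?_⟩
      rw [Set.mem_singleton_iff]
      rintro rfl
      exact h he
    rw [Walk.edges_cons, List.mem_cons] at hedge
    rcases hedge with h1 | h2
    · have hzx : z = x := by
        rw [Sym2.eq_iff] at h1
        rcases h1 with ⟨rfl, rfl⟩ | ⟨rfl, -⟩
        · exact absurd rfl hxy.ne
        · rfl
      subst hzx
      have := dist_le Q
      rw [Walk.length_cons] at hlen
      omega
    · exfalso
      rw [Walk.cons_isPath_iff] at hP
      exact hP.2 (Walk.snd_mem_support_of_mem_edges Q h2)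

lemma not_adj_uw' (hG : G.IsTree) (hwu : G.Adj w u) (hww : G.Adj w w') (huw' : u ≠ w') :
    ¬ G.Adj u w' := by
  intro h
  apply bridge hG hww
  have h1 : (G.deleteEdges {s(w, w')}).Adj w u := by
    rw [deleteEdges_adj]
    refine ⟨hwu, ?_⟩
    rw [Set.mem_singleton_iff, Sym2.eq_iff]
    rintro (⟨-, rfl⟩ | ⟨rfl, -⟩)
    · exact huw' rfl
    · exact hww.ne rfl
  have h2 : (G.deleteEdges {s(w, w')}).Adj u w' := by
    rw [deleteEdges_adj]
    refine ⟨h, ?_⟩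
    rw [Set.mem_singleton_iff, Sym2.eq_iff]
    rintro (⟨rfl, -⟩ | ⟨rfl, -⟩)
    · exact hwu.ne' rfl
    · exact huw' rfl
  exact h1.reachable.trans h2.reachable

lemma dist_w'_u (hG : G.IsTree) (hwu : G.Adj w u) (hww : G.Adj w w') (huw' : u ≠ w') :
    G.dist w' u = 2 := by
  have hc := hG.1
  have hle : G.dist w' u ≤ 2 := by
    have := dist_le (Walk.cons hww.symm (Walk.cons hwu Walk.nil))
    simpa using this
  have h0 : G.dist w' u ≠ 0 := by
    rw [ne_eq, hc.dist_eq_zero_iff]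
    exact fun h => huw' h.symm
  have h1 : G.dist w' u ≠ 1 := by
    rw [ne_eq, dist_eq_one_iff_adj]
    exact fun h => not_adj_uw' hG hwu hww huw' h.symm
  omega

lemma mate_adj_of_ne (hx : x ≠ u) (hy : y ≠ u) (h : G.Adj x y) :
    (mate G u w w').Adj x y := by
  rw [mate, sup_adj]
  left
  rw [deleteEdges_adj]
  refine ⟨h, ?_⟩
  rintro ⟨z, hz, hadjz, he⟩
  have : u ∈ s(x, y) := by rw [he]; simp
  rw [Sym2.mem_iff] at this
  rcases this with rfl | rfl
  · exact hx rfl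
  · exact hy rfl

lemma mate_adj_wu (hwu : G.Adj w u) : (mate G u w w').Adj w u := by
  rw [mate, sup_adj]
  left
  rw [deleteEdges_adj]
  refine ⟨hwu, ?_⟩
  rintro ⟨z, hz, hadjz, he⟩
  rw [Sym2.eq_iff] at he
  rcases he with ⟨rfl, -⟩ | ⟨hwz, -⟩
  · exact hwu.ne rfl
  · exact w_not_mem (hwz ▸ hz)

lemma mate_adj_new {z : V} (hz : z ∈ mateU G u w) (hadj : G.Adj u z)
    (hw' : w' ∉ mateU G u w) : (mate G u w w').Adj w' z := by
  rw [mate, sup_adj]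
  right
  rw [fromEdgeSet_adj]
  exact ⟨⟨z, hz, hadj, rfl⟩, fun h => hw' (h ▸ hz)⟩

lemma walk_lift {x y : V} (W : G.Walk x y) (hu : u ∉ W.support) :
    ∃ W' : (mate G u w w').Walk x y, W'.length = W.length := by
  have hsub : ∀ e ∈ W.edges, e ∈ (mate G u w w').edgeSet := by
    intro e he
    have h1 : e ∈ G.edgeSet := W.edges_subset_edgeSet he
    have hle : G.deleteEdges {e | ∃ z ∈ mateU G u w, G.Adj u z ∧ e = s(u, z)} ≤ mate G u w w' :=
      le_sup_left
    apply edgeSet_mono hle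
    rw [edgeSet_deleteEdges]
    refine ⟨h1, ?_⟩
    rintro ⟨z, hz, hadjz, rfl⟩
    exact hu (W.fst_mem_support_of_mem_edges he)
  exact ⟨W.transfer _ hsub, W.length_transfer hsub⟩

lemma U_to_w'_walk (hww : G.Adj w w') (huw : u ≠ w) (huw' : u ≠ w') {a : V}
    (ha : a ∈ mateU G u w) (P : G.Walk a u) (hP : P.IsPath) :
    ∃ W : (mate G u w w').Walk a w', W.length = P.length := by
  obtain ⟨z, hz, Q, hQ⟩ := Walk.exists_eq_cons_of_ne (Ne.symm ha.1) P.reverse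
  have hPr : P.reverse.IsPath := hP.reverse
  rw [hQ, Walk.cons_isPath_iff] at hPr
  have huQ : u ∉ Q.reverse.support := by
    rw [Walk.support_reverse, List.mem_reverse]; exact hPr.2
  have hzU : z ∈ mateU G u w := U_walk Q.reverse ha huQ
  obtain ⟨W1, hW1⟩ := walk_lift Q.reverse huQ
  refine ⟨W1.concat (mate_adj_new hzU hz (w'_not_mem hww huw huw')).symm, ?_⟩
  rw [Walk.length_concat, hW1, Walk.length_reverse]
  have := congrArg Walk.length hQ
  rw [Walk.length_reverse, Walk.length_cons] at this
  omega

lemma U_to_w'_dist (hc : G.Connected) (hww : G.Adj w w') (huw : u ≠ w) (huw' : u ≠ w')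
    {a : V} (ha : a ∈ mateU G u w) :
    ∃ W : (mate G u w w').Walk a w', W.length = G.dist a u := by
  obtain ⟨P, hP, hlen⟩ := exists_path_dist hc a u
  obtain ⟨W, hW⟩ := U_to_w'_walk hww huw huw' ha P hP
  exact ⟨W, hW.trans hlen⟩

lemma lift_geo (hc : G.Connected) {x t : V}
    (h : G.dist x t < G.dist x u + G.dist u t) :
    ∃ W : (mate G u w w').Walk x t, W.length = G.dist x t := by
  obtain ⟨P, hP, hlen⟩ := exists_path_dist hc x t
  have hu : u ∉ P.support := by
    intro hu
    have hsplit := congrArg Walk.length (P.take_spec hu)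
    rw [Walk.length_append] at hsplit
    have h1 := dist_le (P.takeUntil u hu)
    have h2 := dist_le (P.dropUntil u hu)
    omega
  obtain ⟨W, hW⟩ := walk_lift P hu
  exact ⟨W, hW.trans hlen⟩

lemma lip_walk {H : SimpleGraph V} {f : V → ℤ}
    (hf : ∀ ⦃x y⦄, H.Adj x y → |f x - f y| ≤ 1) {a b : V} (W : H.Walk a b) :
    |f a - f b| ≤ (W.length : ℤ) := by
  induction W with
  | nil => simp
  | @cons a c b h q ih =>
    have h1 : |f a - f b| ≤ |f a - f c| + |f c - f b| := abs_sub_le _ _ _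
    have h2 := hf h
    rw [Walk.length_cons]
    push_cast
    linarith

lemma lip_dist {H : SimpleGraph V} {f : V → ℤ}
    (hf : ∀ ⦃x y⦄, H.Adj x y → |f x - f y| ≤ 1) {a b : V} (hr : H.Reachable a b) :
    |f a - f b| ≤ (H.dist a b : ℤ) := by
  obtain ⟨W, hW⟩ := hr.exists_walk_length_eq_dist
  exact hW ▸ lip_walk hf W

lemma adj_lip {x y b : V} (hc : G.Connected) (h : G.Adj x y) :
    |(G.dist x b : ℤ) - G.dist y b| ≤ 1 := by
  have h1 : G.dist x b ≤ 1 + G.dist y b := by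
    have := hc.dist_triangle (u := x) (v := y) (w := b)
    rwa [dist_eq_one_iff_adj.mpr h] at this
  have h2 : G.dist y b ≤ 1 + G.dist x b := by
    have := hc.dist_triangle (u := y) (v := x) (w := b)
    rwa [dist_eq_one_iff_adj.mpr h.symm] at this
  rw [abs_le]
  constructor <;> push_cast <;> omega

/-- Master Lipschitz lemma for the potential `x ↦ d(x,b) + c·χ_U(x)` on the mate graph. -/
lemma mate_lip (hc : G.Connected) (hww : G.Adj w w') (huw : u ≠ w) (huw' : u ≠ w')
    {b : V} {c : ℤ}
    (hnew : ∀ z, z ∈ mateU G u w → G.Adj u z →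
      |((G.dist z b : ℤ) + c) - (G.dist w' b : ℤ)| ≤ 1) :
    ∀ ⦃x y⦄, (mate G u w w').Adj x y →
      |((G.dist x b : ℤ) + (if x ∈ mateU G u w then c else 0))
        - ((G.dist y b : ℤ) + (if y ∈ mateU G u w then c else 0))| ≤ 1 := by
  intro x y hxy
  rw [mate, sup_adj] at hxy
  rcases hxy with hold | hnew'
  · rw [deleteEdges_adj] at hold
    obtain ⟨hadj, hnd⟩ := hold
    by_cases hx : x ∈ mateU G u w <;> by_cases hy : y ∈ mateU G u w
    · simpa [hx, hy] using adj_lip hc hadj (b := b)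
    · exfalso
      have hyu : y = u := by
        by_contra hne
        exact hy (U_adj hx hadj hne)
      subst hyu
      exact hnd ⟨x, hx, hadj.symm, Sym2.eq_swap⟩
    · exfalso
      have hxu : x = u := by
        by_contra hne
        exact hx (U_adj hy hadj.symm hne)
      subst hxu
      exact hnd ⟨y, hy, hadj, rfl⟩
    · simpa [hx, hy] using adj_lip hc hadj (b := b)
  · rw [fromEdgeSet_adj] at hnew'
    obtain ⟨⟨z, hz, hadjz, he⟩, hne⟩ := hnew'
    have hw'U : w' ∉ mateU G u w := w'_not_mem hww huw huw'
    rw [Sym2.eq_iff] at he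
    rcases he with ⟨rfl, rfl⟩ | ⟨rfl, rfl⟩
    · rw [abs_sub_comm]
      simpa [hz, hw'U] using hnew _ hz hadjz
    · simpa [hz, hw'U] using hnew _ hz hadjz

lemma u_walk_lift (hG : G.IsTree) (hwu : G.Adj w u) {t : V} (ht : t ∉ mateU G u w)
    (htu : t ≠ u) : ∃ W : (mate G u w w').Walk u t, W.length = G.dist u t := by
  obtain ⟨P, hP, hlen⟩ := exists_path_dist hG.1 u t
  obtain ⟨y, hy, Q, rfl⟩ := Walk.exists_eq_cons_of_ne (Ne.symm htu) P
  rw [Walk.cons_isPath_iff] at hP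
  have hyU : y ∉ mateU G u w := by
    intro hyU'
    by_cases h : u ∈ Q.support
    · exact hP.2 h
    · exact ht (U_walk Q hyU' h)
  have hyw : y = w := nbr_eq hG hwu hy hyU
  subst hyw
  obtain ⟨W1, hW1⟩ := walk_lift Q hP.2
  refine ⟨Walk.cons (mate_adj_wu hwu).symm W1, ?_⟩
  rw [Walk.length_cons, hW1]
  rw [Walk.length_cons] at hlen
  omega

lemma lower_bound (hc : G.Connected) (hww : G.Adj w w') (huw : u ≠ w) (huw' : u ≠ w')
    {b : V} {c : ℤ}
    (hnew : ∀ z, z ∈ mateU G u w → G.Adj u z →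
      |((G.dist z b : ℤ) + c) - (G.dist w' b : ℤ)| ≤ 1)
    {a : V} (hr : (mate G u w w').Reachable a b) :
    |((G.dist a b : ℤ) + (if a ∈ mateU G u w then c else 0))
      - (if b ∈ mateU G u w then c else 0)| ≤ ((mate G u w w').dist a b : ℤ) := by
  have := lip_dist (mate_lip hc hww huw huw' hnew) hr
  simpa [dist_self] using this

lemma hnew_u (hG : G.IsTree) (hwu : G.Adj w u) (hww : G.Adj w w') (huw' : u ≠ w') :
    ∀ z, z ∈ mateU G u w → G.Adj u z →
      |((G.dist z u : ℤ) + 2) - (G.dist w' u : ℤ)| ≤ 1 := by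
  intro z hz hadjz
  rw [dist_eq_one_iff_adj.mpr hadjz.symm, dist_w'_u hG hwu hww huw']
  norm_num

lemma hnew_U (hG : G.IsTree) (hwu : G.Adj w u) (hww : G.Adj w w') (huw' : u ≠ w')
    {b : V} (hb : b ∈ mateU G u w) :
    ∀ z, z ∈ mateU G u w → G.Adj u z →
      |((G.dist z b : ℤ) + 2) - (G.dist w' b : ℤ)| ≤ 1 := by
  intro z hz hadjz
  have hc := hG.1
  have hw'U : w' ∉ mateU G u w := w'_not_mem hww hwu.ne' huw'
  have e1 : G.dist w' b = G.dist u b + 2 := by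
    rw [dist_comm, dist_split hc hb hw'U, dist_comm (u := b) (v := u),
      dist_comm (u := u) (v := w'), dist_w'_u hG hwu hww huw']
  have hal := adj_lip hc hadjz.symm (b := b)
  have he : ((G.dist z b : ℤ) + 2) - (G.dist w' b : ℤ)
      = (G.dist z b : ℤ) - (G.dist u b : ℤ) := by
    rw [e1]; push_cast; ring
  rw [he]
  exact hal

lemma hnew_R (hG : G.IsTree) (hwu : G.Adj w u) (hww : G.Adj w w') (huw' : u ≠ w')
    {b : V} (hbU : b ∉ mateU G u w) (hbu : b ≠ u)
    (hbR : (G.deleteEdges {s(w, w')}).Reachable b w') :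
    ∀ z, z ∈ mateU G u w → G.Adj u z →
      |((G.dist z b : ℤ) + (-2)) - (G.dist w' b : ℤ)| ≤ 1 := by
  intro z hz hadjz
  have hc := hG.1
  have hbr := bridge hG hww
  have hset : ({s(w', w)} : Set (Sym2 V)) = {s(w, w')} := by rw [Sym2.eq_swap]
  have hnr : ¬ (G.deleteEdges {s(w', w)}).Reachable w b := by
    rw [hset]
    intro h
    exact hbr (h.trans hbR)
  have d2 : G.dist u b = 1 + G.dist w b := dist_from_u hG hwu hbU hbu
  have d3 : G.dist w b = 1 + G.dist w' b := dist_cut hc hww.symm hnr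
  have dz : G.dist z b = G.dist z u + G.dist u b := dist_split hc hz hbU
  rw [dist_eq_one_iff_adj.mpr hadjz.symm] at dz
  rw [abs_le]
  constructor <;> omega

lemma hnew_L (hG : G.IsTree) (hwu : G.Adj w u) (hww : G.Adj w w') (huw' : u ≠ w')
    {b : V} (hbU : b ∉ mateU G u w) (hbu : b ≠ u)
    (hbR : ¬ (G.deleteEdges {s(w, w')}).Reachable b w') :
    ∀ z, z ∈ mateU G u w → G.Adj u z →
      |((G.dist z b : ℤ) + 0) - (G.dist w' b : ℤ)| ≤ 1 := by
  intro z hz hadjz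
  have hc := hG.1
  have d2 : G.dist u b = 1 + G.dist w b := dist_from_u hG hwu hbU hbu
  have d3 : G.dist w' b = 1 + G.dist w b := dist_cut hc hww fun h => hbR h.symm
  have dz : G.dist z b = G.dist z u + G.dist u b := dist_split hc hz hbU
  rw [dist_eq_one_iff_adj.mpr hadjz.symm] at dz
  rw [abs_le]
  constructor <;> omega

lemma case_u (hG : G.IsTree) (hwu : G.Adj w u) (hww : G.Adj w w') (huw' : u ≠ w')
    {a : V} (ha : a ∈ mateU G u w) :
    (mate G u w w').dist a u = G.dist a u + 2 := by
  have hc := hG.1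
  have huw : u ≠ w := hwu.ne'
  obtain ⟨W1, hW1⟩ := U_to_w'_dist hc hww huw huw' ha
  have hadj1 : (mate G u w w').Adj w' w := mate_adj_of_ne (Ne.symm huw') hwu.ne hww.symm
  have hadj2 : (mate G u w w').Adj w u := mate_adj_wu hwu
  let W : (mate G u w w').Walk a u :=
    W1.append (Walk.cons hadj1 (Walk.cons hadj2 Walk.nil))
  have hWlen : W.length = G.dist a u + 2 := by
    simp [W, Walk.length_append, hW1]
  have hub : (mate G u w w').dist a u ≤ G.dist a u + 2 := hWlen ▸ dist_le W
  have hlow := lower_bound hc hww huw huw' (c := 2) (hnew_u hG hwu hww huw') ⟨W⟩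
  rw [if_pos ha, if_neg u_not_mem] at hlow
  have := (le_abs_self _).trans hlow
  omega

lemma case_R (hG : G.IsTree) (hwu : G.Adj w u) (hww : G.Adj w w') (huw' : u ≠ w')
    {a b : V} (ha : a ∈ mateU G u w) (hb : b ∈ mateR G u w w') :
    (mate G u w w').dist a b + 2 = G.dist a b := by
  have hc := hG.1
  have huw : u ≠ w := hwu.ne'
  have hbU : b ∉ mateU G u w := hb.1
  have hbr := bridge hG hww
  have hRw' : (G.deleteEdges {s(w, w')}).Reachable b w' := hb.2
  have hadj_wu_del : (G.deleteEdges {s(w, w')}).Adj w u := by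
    rw [deleteEdges_adj]
    refine ⟨hwu, ?_⟩
    rw [Set.mem_singleton_iff, Sym2.eq_iff]
    rintro (⟨-, rfl⟩ | ⟨rfl, -⟩)
    · exact huw' rfl
    · exact hww.ne rfl
  have hbu : b ≠ u := by
    rintro rfl
    exact hbr (hadj_wu_del.reachable.trans hRw')
  have d1 : G.dist a b = G.dist a u + G.dist u b := dist_split hc ha hbU
  have d2 : G.dist u b = 1 + G.dist w b := dist_from_u hG hwu hbU hbu
  have hset : ({s(w', w)} : Set (Sym2 V)) = {s(w, w')} := by rw [Sym2.eq_swap]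
  have hnr : ¬ (G.deleteEdges {s(w', w)}).Reachable w b := by
    rw [hset]
    intro h
    exact hbr (h.trans hRw')
  have d3 : G.dist w b = 1 + G.dist w' b := dist_cut hc hww.symm hnr
  obtain ⟨W1, hW1⟩ := U_to_w'_dist hc hww huw huw' ha
  have hlt : G.dist w' b < G.dist w' u + G.dist u b := by
    rw [dist_w'_u hG hwu hww huw']
    omega
  obtain ⟨W2, hW2⟩ := lift_geo hc (w := w) hlt
  let W := W1.append W2
  have hWlen : W.length = G.dist a u + G.dist w' b := by
    rw [Walk.length_append, hW1, hW2]
  have hub := hWlen ▸ dist_le W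
  have hlow := lower_bound hc hww huw huw' (c := -2)
    (hnew_R hG hwu hww huw' hbU hbu hRw') ⟨W⟩
  rw [if_pos ha, if_neg hbU] at hlow
  have := (le_abs_self _).trans hlow
  omega

lemma case_UU (hG : G.IsTree) (hwu : G.Adj w u) (hww : G.Adj w w') (huw' : u ≠ w')
    {a b : V} (ha : a ∈ mateU G u w) (hb : b ∈ mateU G u w) :
    (mate G u w w').dist a b = G.dist a b := by
  have hc := hG.1
  have huw : u ≠ w := hwu.ne'
  obtain ⟨P, hP, hlen⟩ := exists_path_dist hc a b
  have hub : ∃ W : (mate G u w w').Walk a b, W.length = G.dist a b := by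
    by_cases hu : u ∈ P.support
    · obtain ⟨W1, hW1⟩ := U_to_w'_walk hww huw huw' ha (P.takeUntil u hu) (hP.takeUntil hu)
      obtain ⟨W2, hW2⟩ := U_to_w'_walk hww huw huw' hb (P.dropUntil u hu).reverse
        (hP.dropUntil hu).reverse
      refine ⟨W1.append W2.reverse, ?_⟩
      rw [Walk.length_append, Walk.length_reverse, hW1, hW2, Walk.length_reverse]
      have hsplit := congrArg Walk.length (P.take_spec hu)
      rw [Walk.length_append] at hsplit
      omega
    · obtain ⟨W, hW⟩ := walk_lift P hu
      exact ⟨W, hW.trans hlen⟩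
  obtain ⟨W, hWlen⟩ := hub
  have h1 := hWlen ▸ dist_le W
  have hlow := lower_bound hc hww huw huw' (c := 2) (hnew_U hG hwu hww huw' hb) ⟨W⟩
  rw [if_pos ha, if_pos hb] at hlow
  have := (le_abs_self _).trans hlow
  omega

lemma case_L (hG : G.IsTree) (hwu : G.Adj w u) (hww : G.Adj w w') (huw' : u ≠ w')
    {a b : V} (ha : a ∈ mateU G u w) (hbU : b ∉ mateU G u w) (hbu : b ≠ u)
    (hbR : ¬ (G.deleteEdges {s(w, w')}).Reachable b w') :
    (mate G u w w').dist a b = G.dist a b := by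
  have hc := hG.1
  have huw : u ≠ w := hwu.ne'
  have d1 : G.dist a b = G.dist a u + G.dist u b := dist_split hc ha hbU
  have d2 : G.dist u b = 1 + G.dist w b := dist_from_u hG hwu hbU hbu
  obtain ⟨W1, hW1⟩ := U_to_w'_dist hc hww huw huw' ha
  have hadj1 : (mate G u w w').Adj w' w := mate_adj_of_ne (Ne.symm huw') hwu.ne hww.symm
  have hlt : G.dist w b < G.dist w u + G.dist u b := by
    rw [dist_eq_one_iff_adj.mpr hwu]
    omega
  obtain ⟨W2, hW2⟩ := lift_geo hc (w := w) hlt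
  let W := W1.append (Walk.cons hadj1 W2)
  have hWlen : W.length = G.dist a b := by
    rw [Walk.length_append, Walk.length_cons, hW1, hW2]
    omega
  have h1 := hWlen ▸ dist_le W
  have hlow := lower_bound hc hww huw huw' (c := 0)
    (hnew_L hG hwu hww huw' hbU hbu hbR) ⟨W⟩
  rw [if_pos ha, if_neg hbU] at hlow
  simp only [add_zero] at hlow
  have := (le_abs_self _).trans hlow
  omega

lemma case_out (hG : G.IsTree) (hwu : G.Adj w u) (hww : G.Adj w w') (huw' : u ≠ w')
    {a b : V} (haU : a ∉ mateU G u w) (hbU : b ∉ mateU G u w) :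
    (mate G u w w').dist a b = G.dist a b := by
  have hc := hG.1
  have huw : u ≠ w := hwu.ne'
  have hub : ∃ W : (mate G u w w').Walk a b, W.length = G.dist a b := by
    by_cases hau : a = u
    · by_cases hbu : b = u
      · have hab : a = b := hau.trans hbu.symm
        subst hab
        exact ⟨Walk.nil, by rw [Walk.length_nil, SimpleGraph.dist_self]⟩
      · obtain ⟨W, hW⟩ := u_walk_lift (w' := w') hG hwu hbU hbu
        refine ⟨W.copy hau.symm rfl, ?_⟩
        rw [Walk.length_copy, hW, hau]
    · by_cases hbu : b = u
      · obtain ⟨W, hW⟩ := u_walk_lift (w' := w') hG hwu haU hau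
        refine ⟨(W.copy hbu.symm rfl).reverse, ?_⟩
        rw [Walk.length_reverse, Walk.length_copy, hW, hbu, SimpleGraph.dist_comm]
      · apply lift_geo hc (w := w)
        have e1 : G.dist a u = 1 + G.dist w a := by
          rw [SimpleGraph.dist_comm, dist_from_u hG hwu haU hau]
        have e2 : G.dist u b = 1 + G.dist w b := dist_from_u hG hwu hbU hbu
        have tri := hc.dist_triangle (u := a) (v := w) (w := b)
        have hcm : G.dist a w = G.dist w a := SimpleGraph.dist_comm
        omega
  obtain ⟨W, hWlen⟩ := hub
  have h1 := hWlen ▸ dist_le W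
  have h2 : (G.dist a b : ℤ) ≤ ((mate G u w w').dist a b : ℤ) := by
    by_cases hbu : b = u
    · rw [hbu]
      have hr : (mate G u w w').Reachable a u := hbu ▸ (⟨W⟩ : (mate G u w w').Reachable a b)
      have hlow := lower_bound hc hww huw huw' (c := 2) (hnew_u hG hwu hww huw') hr
      rw [if_neg haU, if_neg u_not_mem] at hlow
      simpa using (le_abs_self _).trans hlow
    · by_cases hbR : (G.deleteEdges {s(w, w')}).Reachable b w'
      · have hlow := lower_bound hc hww huw huw' (c := -2)
          (hnew_R hG hwu hww huw' hbU hbu hbR) ⟨W⟩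
        rw [if_neg haU, if_neg hbU] at hlow
        simpa using (le_abs_self _).trans hlow
      · have hlow := lower_bound hc hww huw huw' (c := 0)
          (hnew_L hG hwu hww huw' hbU hbu hbR) ⟨W⟩
        rw [if_neg haU, if_neg hbU] at hlow
        simpa using (le_abs_self _).trans hlow
  omega

theorem mate_dist_main (hG : G.IsTree) (hwu : G.Adj w u) (hww : G.Adj w w')
    (huw' : u ≠ w') :
    ∀ a b : V,
      (a ∈ mateU G u w → b ∈ mateR G u w w' →
        (mate G u w w').dist a b + 2 = G.dist a b) ∧
      (a ∈ mateU G u w → b = u →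
        (mate G u w w').dist a b = G.dist a b + 2) ∧
      (¬ ((a ∈ mateU G u w ∧ (b ∈ mateR G u w w' ∨ b = u)) ∨
          (b ∈ mateU G u w ∧ (a ∈ mateR G u w w' ∨ a = u))) →
        (mate G u w w').dist a b = G.dist a b) := by
  intro a b
  refine ⟨fun ha hb => case_R hG hwu hww huw' ha hb,
          fun ha hb => by subst hb; exact case_u hG hwu hww huw' ha, ?_⟩
  intro h
  push_neg at h
  by_cases ha : a ∈ mateU G u w
  · obtain ⟨hbR, hbu⟩ := h.1 ha
    by_cases hb : b ∈ mateU G u w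
    · exact case_UU hG hwu hww huw' ha hb
    · have hbr' : ¬ (G.deleteEdges {s(w, w')}).Reachable b w' := fun hr => hbR ⟨hb, hr⟩
      exact case_L hG hwu hww huw' ha hb hbu hbr'
  · by_cases hb : b ∈ mateU G u w
    · obtain ⟨haR, hau⟩ := h.2 hb
      have har' : ¬ (G.deleteEdges {s(w, w')}).Reachable a w' := fun hr => haR ⟨ha, hr⟩
      rw [SimpleGraph.dist_comm (G := mate G u w w'), SimpleGraph.dist_comm (G := G)]
      exact case_L hG hwu hww huw' hb ha hau har'
    · exact case_out hG hwu hww huw' ha hb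

end MateAux

/-- Distances in the mate `T'`: they drop by `2` between `U` and `R`, grow by `2`
between `U` and `u`, and are unchanged in all other cases (up to symmetry). -/
theorem stmt11 [Fintype V] (G : SimpleGraph V) (hG : G.IsTree)
    (hNC : ¬ IsCaterpillar G) (v0 vd : V) (p : G.Walk v0 vd) (hp : p.IsPath)
    (hlen : p.length = graphDiam G) (j : ℕ) (hj : graphDiam G ≤ 2 * j)
    (hjlt : j < graphDiam G) (u : V) (hadj : G.Adj (p.getVert j) u)
    (huP : u ∉ p.support) (huNL : ¬ IsLeaf G u) :
    ∀ a b : V,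
      (a ∈ mateU G u (p.getVert j) → b ∈ mateR G u (p.getVert j) (p.getVert (j + 1)) →
        (mate G u (p.getVert j) (p.getVert (j + 1))).dist a b + 2 = G.dist a b) ∧
      (a ∈ mateU G u (p.getVert j) → b = u →
        (mate G u (p.getVert j) (p.getVert (j + 1))).dist a b = G.dist a b + 2) ∧
      (¬ ((a ∈ mateU G u (p.getVert j) ∧
            (b ∈ mateR G u (p.getVert j) (p.getVert (j + 1)) ∨ b = u)) ∨
          (b ∈ mateU G u (p.getVert j) ∧
            (a ∈ mateR G u (p.getVert j) (p.getVert (j + 1)) ∨ a = u))) →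
        (mate G u (p.getVert j) (p.getVert (j + 1))).dist a b = G.dist a b) := by
  have hjp : j < p.length := by rw [hlen]; exact hjlt
  have hww : G.Adj (p.getVert j) (p.getVert (j + 1)) := p.adj_getVert_succ hjp
  have huw' : u ≠ p.getVert (j + 1) := by
    intro h
    apply huP
    rw [h]
    exact SimpleGraph.Walk.mem_support_iff_exists_getVert.mpr ⟨j + 1, rfl, by omega⟩
  exact MateAux.mate_dist_main hG hadj hww huw'
end

section
/- Let g : ℕ → ℝ be nonnegative and nondecreasing, and let T be a tree that is not a caterpillar, with mate T' (with respect to a longest path P and a non-leaf off-path neighbour u). Then W(T'; g) ≤ W(T; g), where W(G;g) = Σ_{{a,b}} g(d(a,b)). If moreover g is strictly increasing, then W(T'; g) < W(T; g). -/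
open SimpleGraph Finset

attribute [local instance] Classical.propDecidable

variable {V : Type*}

private lemma walk_getVert_inj {G : SimpleGraph V} {a b : V}
    (q : G.Walk a b) (hq : q.IsPath) : ∀ i ≤ q.length, ∀ k ≤ q.length,
    q.getVert i = q.getVert k → i = k := by
  induction q with
  | nil => intro i hi k hk _; simp at hi hk; omega
  | @cons a c b h r ih =>
      intro i hi k hk he
      match i, k with
      | 0, 0 => rfl
      | 0, (k+1) =>
          exfalso
          rw [Walk.getVert_zero, Walk.getVert_cons_succ] at he
          have hk' : k ≤ r.length := by simpa using hk
          have : a ∈ r.support := Walk.mem_support_iff_exists_getVert.mpr ⟨k, he.symm, hk'⟩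
          exact ((Walk.cons_isPath_iff h r).mp hq).2 this
      | (i+1), 0 =>
          exfalso
          rw [Walk.getVert_zero, Walk.getVert_cons_succ] at he
          have hi' : i ≤ r.length := by simpa using hi
          have : a ∈ r.support := Walk.mem_support_iff_exists_getVert.mpr ⟨i, he, hi'⟩
          exact ((Walk.cons_isPath_iff h r).mp hq).2 this
      | (i+1), (k+1) =>
          rw [Walk.getVert_cons_succ, Walk.getVert_cons_succ] at he
          have := ih hq.of_cons i (by simpa using hi) k (by simpa using hk) he
          omega

/-- In a tree every path realises the distance. -/
private lemma tree_path_length {G : SimpleGraph V} (hG : G.IsTree) {a b : V}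
    (q : G.Walk a b) (hq : q.IsPath) : q.length = G.dist a b := by
  obtain ⟨r, hr, hrl⟩ := hG.isConnected.exists_path_of_dist a b
  rw [(hG.existsUnique_path a b).unique hq hr, hrl]
section helpers

variable {G : SimpleGraph V} {u w : V}

private lemma mateU_ne_u {x : V} (hx : x ∈ mateU G u w) : x ≠ u := hx.1

private lemma not_mem_mateU_self : w ∉ mateU G u w := fun h => h.2 (Reachable.refl w)

private lemma u_not_mem_mateU : u ∉ mateU G u w := fun h => h.1 rfl

/-- The deleted-star graph has no edges at `u`. -/
private lemma hdel_adj {x y : V} (h : (G.deleteEdges {e : Sym2 V | u ∈ e}).Adj x y) :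
    G.Adj x y ∧ x ≠ u ∧ y ≠ u := by
  rw [SimpleGraph.deleteEdges_adj] at h
  refine ⟨h.1, ?_, ?_⟩ <;> rintro rfl <;> exact h.2 (by simp)

/-- `U` is closed under adjacency avoiding `u`. -/
private lemma mateU_closed {x y : V} (hx : x ∈ mateU G u w) (hy : y ≠ u)
    (hxy : G.Adj x y) : y ∈ mateU G u w := by
  refine ⟨hy, fun hr => hx.2 (Reachable.trans ?_ hr)⟩
  apply SimpleGraph.Adj.reachable
  rw [SimpleGraph.deleteEdges_adj]
  refine ⟨hxy, ?_⟩
  simp only [Set.mem_setOf_eq, Sym2.mem_iff]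
  rintro (rfl | rfl)
  · exact hx.1 rfl
  · exact hy rfl

/-- Any walk from inside `U` to outside `U` passes through `u`. -/
private lemma u_mem_support_of_cross {s t : V} (q : G.Walk s t)
    (hs : s ∈ mateU G u w) (ht : t ∉ mateU G u w) : u ∈ q.support := by
  induction q with
  | nil => exact absurd hs ht
  | @cons a c b h r ih =>
      by_cases hc : c = u
      · subst hc; simp
      · exact List.mem_cons_of_mem _ (ih (mateU_closed hs hc h) ht)

private lemma u_mem_support_of_cross' {s t : V} (q : G.Walk s t)
    (hs : s ∉ mateU G u w) (ht : t ∈ mateU G u w) : u ∈ q.support := by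
  have := u_mem_support_of_cross q.reverse ht hs
  rwa [Walk.support_reverse, List.mem_reverse] at this

/-- `u` is not on a walk of the star-deleted graph unless it is an endpoint. -/
private lemma u_not_mem_H_walk {a b : V}
    (r : (G.deleteEdges {e : Sym2 V | u ∈ e}).Walk a b) (ha : a ≠ u) (hb : b ≠ u) :
    u ∉ r.support := by
  induction r with
  | nil => simpa using ha.symm
  | @cons a c b h r ih =>
      have hc := (hdel_adj h).2.2
      simp only [Walk.support_cons, List.mem_cons]
      rintro (rfl | hm)
      · exact ha rfl
      · exact ih hc hb hm

/-- Every neighbour of `u` other than `w` lies in `U`. -/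
private lemma nbr_mem_mateU (hG : G.IsTree) (huw : G.Adj u w) {s : V}
    (hus : G.Adj u s) (hsw : s ≠ w) : s ∈ mateU G u w := by
  refine ⟨hus.ne', fun hr => ?_⟩
  obtain ⟨r0⟩ := hr
  have hr1 : (r0.bypass).IsPath := Walk.bypass_isPath r0
  set r := r0.bypass with hrdef
  have hruns : u ∉ r.support := u_not_mem_H_walk r hus.ne' huw.ne'
  -- transfer r to G
  have hsub : ∀ e ∈ r.edges, e ∈ G.edgeSet := fun e he =>
    SimpleGraph.edgeSet_mono (SimpleGraph.deleteEdges_le _) (r.edges_subset_edgeSet he)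
  have hr2 : (r.transfer G hsub).IsPath := by
    rw [Walk.isPath_def, Walk.support_transfer]
    exact (Walk.isPath_def _).mp hr1
  -- the other path s - u - w
  have hq2 : (Walk.cons hus.symm (Walk.cons huw Walk.nil)).IsPath := by
    simp [Walk.cons_isPath_iff, hus.ne', hsw, huw.ne]
  have := (hG.existsUnique_path s w).unique hr2 hq2
  have hu_mem : u ∈ (r.transfer G hsub).support := by
    rw [this]; simp
  rw [Walk.support_transfer] at hu_mem
  exact hruns hu_mem

end helpers

section helpers2

variable {G : SimpleGraph V} {u w w' : V}

/-- Splitting the distance at the cut vertex `u`. -/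
private lemma dist_split (hG : G.IsTree) {x y : V} (hx : x ∈ mateU G u w)
    (hy : y ∉ mateU G u w) : G.dist x y = G.dist x u + G.dist u y := by
  refine le_antisymm (hG.isConnected.dist_triangle) ?_
  obtain ⟨q, hql⟩ := hG.isConnected.exists_walk_length_eq_dist x y
  have hu : u ∈ q.support := u_mem_support_of_cross q hx hy
  calc G.dist x u + G.dist u y ≤ (q.takeUntil u hu).length + (q.dropUntil u hu).length :=
        Nat.add_le_add (SimpleGraph.dist_le _) (SimpleGraph.dist_le _)
    _ = q.length := by rw [← Walk.length_append, Walk.take_spec]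
    _ = G.dist x y := hql

/-- First step from `u` towards a vertex outside `U`. -/
private lemma dist_first_step (hG : G.IsTree) (huw : G.Adj u w) {y : V}
    (hy : y ∉ mateU G u w) (hyu : y ≠ u) : G.dist u y = 1 + G.dist w y := by
  refine le_antisymm ?_ ?_
  · calc G.dist u y ≤ G.dist u w + G.dist w y := hG.isConnected.dist_triangle
      _ = 1 + G.dist w y := by rw [SimpleGraph.dist_eq_one_iff_adj.mpr huw]
  · obtain ⟨q, hq, hql⟩ := hG.isConnected.exists_path_of_dist u y
    cases q with
    | nil => exact absurd rfl hyu.symm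
    | @cons a c b h r =>
        by_cases hc : c ∈ mateU G u w
        · exfalso
          have := u_mem_support_of_cross r hc hy
          exact ((Walk.cons_isPath_iff h r).mp hq).2 this
        · have hcw : c = w := by
            by_contra hne
            exact hc (nbr_mem_mateU hG huw h hne)
          subst hcw
          rw [← hql]
          simp only [Walk.length_cons]
          have := SimpleGraph.dist_le r
          omega

variable [Fintype V]

/-- Edges of `G` avoiding `u` survive in the mate. -/
private lemma mate_adj_of_ne {a b : V} (hab : G.Adj a b) (ha : a ≠ u) (hb : b ≠ u) :
    (mate G u w w').Adj a b := by
  left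
  rw [SimpleGraph.deleteEdges_adj]
  refine ⟨hab, ?_⟩
  rintro ⟨z, hz, hadj, he⟩
  have : u ∈ s(a, b) := by rw [he]; simp
  simp only [Sym2.mem_iff] at this
  rcases this with rfl | rfl
  · exact ha rfl
  · exact hb rfl

/-- The edge `u w` survives in the mate. -/
private lemma mate_adj_uw (huw : G.Adj u w) : (mate G u w w').Adj u w := by
  left
  rw [SimpleGraph.deleteEdges_adj]
  refine ⟨huw, ?_⟩
  rintro ⟨z, hz, hadj, he⟩
  rw [Sym2.eq_iff] at he
  rcases he with ⟨-, rfl⟩ | ⟨rfl, rfl⟩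
  · exact not_mem_mateU_self hz
  · exact huw.ne rfl

/-- New edges of the mate. -/
private lemma mate_adj_new {z : V} (hz : z ∈ mateU G u w) (hadj : G.Adj u z)
    (hw' : w' ∉ mateU G u w) : (mate G u w w').Adj w' z := by
  right
  rw [SimpleGraph.fromEdgeSet_adj]
  exact ⟨⟨z, hz, hadj, rfl⟩, fun h => hw' (h ▸ hz)⟩

/-- Transfer of a `G`-walk avoiding `u` to the mate. -/
private lemma mate_transfer1 {a b : V} (q : G.Walk a b) (hq : u ∉ q.support) :
    ∃ q' : (mate G u w w').Walk a b, q'.length = q.length := by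
  have hsub : ∀ e ∈ q.edges, e ∈ (mate G u w w').edgeSet := by
    intro e he
    induction e with
    | h x y =>
        exact (mate_adj_of_ne (q.edges_subset_edgeSet he)
          (fun h => hq (h ▸ q.fst_mem_support_of_mem_edges he))
          (fun h => hq (h ▸ q.snd_mem_support_of_mem_edges he)))
  exact ⟨q.transfer _ hsub, Walk.length_transfer _ _⟩

/-- Transfer of a `G`-walk avoiding `U` to the mate. -/
private lemma mate_transfer2 {a b : V} (q : G.Walk a b)
    (hq : ∀ x ∈ q.support, x ∉ mateU G u w) :
    ∃ q' : (mate G u w w').Walk a b, q'.length = q.length := by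
  have hsub : ∀ e ∈ q.edges, e ∈ (mate G u w w').edgeSet := by
    intro e he
    induction e with
    | h x y =>
        have hxy : G.Adj x y := q.edges_subset_edgeSet he
        left
        rw [SimpleGraph.deleteEdges_adj]
        refine ⟨hxy, ?_⟩
        rintro ⟨z, hz, hadj, hee⟩
        rw [Sym2.eq_iff] at hee
        rcases hee with ⟨-, rfl⟩ | ⟨rfl, rfl⟩
        · exact hq _ (q.snd_mem_support_of_mem_edges he) hz
        · exact hq _ (q.fst_mem_support_of_mem_edges he) hz
  exact ⟨q.transfer _ hsub, Walk.length_transfer _ _⟩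

end helpers2

section helpers3

variable [Fintype V] {G : SimpleGraph V} {u w w' : V}

set_option linter.unusedSectionVars false

/-- A mate-walk between two vertices outside `U`, of length the `G`-distance. -/
private lemma mate_walk_out (hG : G.IsTree) {a b : V} (ha : a ∉ mateU G u w)
    (hb : b ∉ mateU G u w) :
    ∃ q' : (mate G u w w').Walk a b, q'.length = G.dist a b := by
  obtain ⟨q, hq, hql⟩ := hG.isConnected.exists_path_of_dist a b
  have hsupp : ∀ c ∈ q.support, c ∉ mateU G u w := by
    intro c hc hcU
    have hu1 : u ∈ (q.takeUntil c hc).support := u_mem_support_of_cross' _ ha hcU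
    have hu2 : u ∈ (q.dropUntil c hc).support := u_mem_support_of_cross _ hcU hb
    have hnd : q.support.Nodup := (Walk.isPath_def _).mp hq
    rw [← Walk.take_spec q hc, Walk.support_append] at hnd
    have hu2' : u ∈ (q.dropUntil c hc).support.tail := by
      rw [(q.dropUntil c hc).support_eq_cons, List.mem_cons] at hu2
      rcases hu2 with rfl | hm
      · exact absurd hcU u_not_mem_mateU
      · exact hm
    exact (List.nodup_append'.mp hnd).2.2 hu1 hu2'
  obtain ⟨q', hl⟩ := mate_transfer2 (w' := w') q hsupp
  exact ⟨q', by rw [hl, hql]⟩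

/-- A mate-walk from `x ∈ U` to `w'` of length `d_G(x,u)`. -/
private lemma mate_walk_U (hG : G.IsTree) (huw : G.Adj u w) {x : V}
    (hx : x ∈ mateU G u w) (hw' : w' ∉ mateU G u w) :
    ∃ q' : (mate G u w w').Walk x w', q'.length = G.dist x u := by
  obtain ⟨q, hq, hql⟩ := hG.isConnected.exists_path_of_dist x u
  have hr : q.reverse.IsPath := hq.reverse
  rw [← SimpleGraph.dist_comm, ← Walk.length_reverse] at hql
  revert hr hql
  generalize q.reverse = r
  intro hql hr
  cases r with
  | nil => exact absurd rfl hx.1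
  | @cons a c b h r' =>
      have hrp := (Walk.cons_isPath_iff h r').mp hr
      by_cases hcU : c ∈ mateU G u w
      · have hnr : u ∉ r'.reverse.support := by
          rw [Walk.support_reverse]
          simpa using hrp.2
        obtain ⟨t1, ht1⟩ := mate_transfer1 (w' := w') r'.reverse hnr
        refine ⟨t1.concat ((mate_adj_new hcU h hw').symm), ?_⟩
        rw [Walk.length_concat, ht1, Walk.length_reverse, SimpleGraph.dist_comm, ← hql]
        simp
      · exfalso
        have hcw : c = w := by
          by_contra hne
          exact hcU (nbr_mem_mateU hG huw h hne)
        subst hcw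
        exact hrp.2 (u_mem_support_of_cross' r' not_mem_mateU_self hx)

end helpers3

section helpers4

variable [Fintype V] {G : SimpleGraph V} {u w w' : V}

set_option linter.unusedSectionVars false

private lemma key_out (hG : G.IsTree) {a b : V} (ha : a ∉ mateU G u w)
    (hb : b ∉ mateU G u w) : (mate G u w w').dist a b ≤ G.dist a b := by
  obtain ⟨q', hl⟩ := mate_walk_out (w' := w') hG ha hb
  exact hl ▸ SimpleGraph.dist_le q'

private lemma key_D (hG : G.IsTree) (huw : G.Adj u w) {x : V}
    (hx : x ∈ mateU G u w) (hw' : w' ∉ mateU G u w) :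
    (mate G u w w').dist x w' ≤ G.dist x u := by
  obtain ⟨q', hl⟩ := mate_walk_U hG huw hx hw'
  exact hl ▸ SimpleGraph.dist_le q'

private lemma key_E (hG : G.IsTree) (huw : G.Adj u w) (hww' : G.Adj w w') {x : V}
    (hx : x ∈ mateU G u w) (hw' : w' ∉ mateU G u w) (hw'u : w' ≠ u)
    (h2 : G.dist u w' = 2) :
    (mate G u w w').dist x u ≤ G.dist x w' := by
  obtain ⟨q', hl⟩ := mate_walk_U hG huw hx hw'
  have e1 : (mate G u w w').Adj w' w := mate_adj_of_ne hww'.symm hw'u huw.ne'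
  have e2 : (mate G u w w').Adj w u := (mate_adj_uw huw).symm
  have hwalk := SimpleGraph.dist_le ((q'.concat e1).concat e2)
  rw [Walk.length_concat, Walk.length_concat, hl] at hwalk
  rw [dist_split hG hx hw', h2]
  omega

private lemma key_C (hG : G.IsTree) (huw : G.Adj u w) (hww' : G.Adj w w') {x y : V}
    (hx : x ∈ mateU G u w) (hw' : w' ∉ mateU G u w) (hy : y ∉ mateU G u w)
    (hyu : y ≠ u) : (mate G u w w').dist x y ≤ G.dist x y := by
  obtain ⟨q1, hl1⟩ := mate_walk_U hG huw hx hw'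
  obtain ⟨q2, hl2⟩ := mate_walk_out (w' := w') hG hw' hy
  have hwalk := SimpleGraph.dist_le (q1.append q2)
  rw [Walk.length_append, hl1, hl2] at hwalk
  have h3 : G.dist w' y ≤ G.dist u y := by
    calc G.dist w' y ≤ G.dist w' w + G.dist w y := hG.isConnected.dist_triangle
      _ = 1 + G.dist w y := by rw [SimpleGraph.dist_eq_one_iff_adj.mpr hww'.symm]
      _ = G.dist u y := (dist_first_step hG huw hy hyu).symm
  rw [dist_split hG hx hy]
  omega

private lemma key_in (hG : G.IsTree) (huw : G.Adj u w) {a b : V}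
    (ha : a ∈ mateU G u w) (hb : b ∈ mateU G u w) (hw' : w' ∉ mateU G u w) :
    (mate G u w w').dist a b ≤ G.dist a b := by
  obtain ⟨q, hq, hql⟩ := hG.isConnected.exists_path_of_dist a b
  by_cases hu : u ∈ q.support
  · obtain ⟨q1, hl1⟩ := mate_walk_U hG huw ha hw'
    obtain ⟨q2, hl2⟩ := mate_walk_U hG huw hb hw'
    have hwalk := SimpleGraph.dist_le (q1.append q2.reverse)
    rw [Walk.length_append, Walk.length_reverse, hl1, hl2] at hwalk
    have hsplit : G.dist a u + G.dist u b ≤ G.dist a b := by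
      calc G.dist a u + G.dist u b
          ≤ (q.takeUntil u hu).length + (q.dropUntil u hu).length :=
            Nat.add_le_add (SimpleGraph.dist_le _) (SimpleGraph.dist_le _)
        _ = q.length := by rw [← Walk.length_append, Walk.take_spec]
        _ = G.dist a b := hql
    have := SimpleGraph.dist_comm (G := G) (u := b) (v := u)
    omega
  · obtain ⟨q', hl⟩ := mate_transfer1 (w' := w') q hu
    rw [← hql, ← hl]
    exact SimpleGraph.dist_le q'

end helpers4

set_option maxHeartbeats 1000000 in
/-- If `g : ℕ → ℝ` is nonnegative and nondecreasing, then the mate `T'` of a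
non-caterpillar tree `T` satisfies `W(T';g) ≤ W(T;g)`; if `g` is strictly
increasing, the inequality is strict. -/
theorem stmt12 [Fintype V] (g : ℕ → ℝ) (hg0 : ∀ n : ℕ, 0 ≤ g n) (hgmono : Monotone g)
    (G : SimpleGraph V) (hG : G.IsTree)
    (hNC : ¬ IsCaterpillar G) (v0 vd : V) (p : G.Walk v0 vd) (hp : p.IsPath)
    (hlen : p.length = graphDiam G) (j : ℕ) (hj : graphDiam G ≤ 2 * j)
    (hjlt : j < graphDiam G) (u : V) (hadj : G.Adj (p.getVert j) u)
    (huP : u ∉ p.support) (huNL : ¬ IsLeaf G u) :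
    wiener (mate G u (p.getVert j) (p.getVert (j + 1))) g ≤ wiener G g ∧
      (StrictMono g →
        wiener (mate G u (p.getVert j) (p.getVert (j + 1))) g < wiener G g) := by
  classical
  set w := p.getVert j with hwdef
  set w' := p.getVert (j + 1) with hw'def
  have hjlen : j < p.length := hlen ▸ hjlt
  have huw : G.Adj u w := hadj.symm
  have hww' : G.Adj w w' := p.adj_getVert_succ hjlen
  -- no vertex of `p` lies in `U`
  have hPnotU : ∀ c ∈ p.support, c ∉ mateU G u w := by
    intro c hc hcU
    have hsub : ∀ e ∈ p.edges, e ∈ (G.deleteEdges {e : Sym2 V | u ∈ e}).edgeSet := by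
      intro e he
      induction e with
      | h x y =>
          rw [SimpleGraph.mem_edgeSet, SimpleGraph.deleteEdges_adj]
          refine ⟨p.edges_subset_edgeSet he, ?_⟩
          simp only [Set.mem_setOf_eq, Sym2.mem_iff]
          rintro (rfl | rfl)
          · exact huP (p.fst_mem_support_of_mem_edges he)
          · exact huP (p.snd_mem_support_of_mem_edges he)
    set pH := p.transfer _ hsub with hpH
    have hcH : c ∈ pH.support := by rw [Walk.support_transfer]; exact hc
    have hwH : w ∈ pH.support := by
      rw [Walk.support_transfer]
      exact Walk.mem_support_iff_exists_getVert.mpr ⟨j, rfl, hjlen.le⟩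
    exact hcU.2 ((pH.takeUntil c hcH).reachable.symm.trans (pH.takeUntil w hwH).reachable)
  have hwU : w ∉ mateU G u w := not_mem_mateU_self
  have hw'P : w' ∈ p.support := Walk.mem_support_iff_exists_getVert.mpr ⟨j + 1, rfl, hjlen⟩
  have hw'U : w' ∉ mateU G u w := hPnotU _ hw'P
  have hw'u : w' ≠ u := fun h => huP (h ▸ hw'P)
  -- distance from u to w' is 2
  have h2 : G.dist u w' = 2 := by
    have hle2 : G.dist u w' ≤ 2 := by
      have := SimpleGraph.dist_le (Walk.cons huw (Walk.cons hww' Walk.nil))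
      simpa using this
    have hpos : 0 < G.dist u w' := hG.isConnected.pos_dist_of_ne hw'u.symm
    have hne1 : G.dist u w' ≠ 1 := by
      intro h
      exact hw'U (nbr_mem_mateU hG huw (SimpleGraph.dist_eq_one_iff_adj.mp h) hww'.ne')
    omega
  -- a second neighbour of u
  obtain ⟨x0, hx0adj, hx0w⟩ : ∃ z, G.Adj u z ∧ z ≠ w := by
    haveI : Nonempty {x : V // G.Adj u x} := ⟨⟨w, huw⟩⟩
    have h1 : 1 < Nat.card {x : V // G.Adj u x} :=
      lt_of_le_of_ne Nat.card_pos (Ne.symm huNL)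
    obtain ⟨a, b, hab⟩ := Finite.one_lt_card_iff_nontrivial.mp h1
    by_cases haw : (a : V) = w
    · exact ⟨b, b.2, fun h => hab (Subtype.ext (haw.trans h.symm))⟩
    · exact ⟨a, a.2, haw⟩
  have hx0U : x0 ∈ mateU G u w := nbr_mem_mateU hG huw hx0adj hx0w
  -- the path continues past w'
  have hj2len : j + 2 ≤ p.length := by
    by_contra hcon
    have hje : j + 1 = p.length := by omega
    have hvdw' : vd = w' := by rw [hw'def, hje, Walk.getVert_length]
    have hv0P : v0 ∈ p.support := p.start_mem_support
    have hv0U : v0 ∉ mateU G u w := hPnotU _ hv0P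
    have hv0u : v0 ≠ u := fun h => huP (h ▸ hv0P)
    have hd1 : G.dist x0 v0 = G.dist x0 u + G.dist u v0 := dist_split hG hx0U hv0U
    have hd2 : G.dist u v0 = 1 + G.dist w v0 := dist_first_step hG huw hv0U hv0u
    have hd3 : G.dist x0 u = 1 := SimpleGraph.dist_eq_one_iff_adj.mpr hx0adj.symm
    have hd4 : p.length = G.dist v0 vd := tree_path_length hG p hp
    have hd5 : G.dist v0 vd ≤ G.dist v0 w + G.dist w vd := hG.isConnected.dist_triangle
    have hd6 : G.dist w vd = 1 := by
      rw [hvdw']; exact SimpleGraph.dist_eq_one_iff_adj.mpr hww'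
    have hd7 : G.dist v0 x0 ≤ ecc G v0 := Finset.le_sup (Finset.mem_univ x0)
    have hd8 : ecc G v0 ≤ graphDiam G := Finset.le_sup (Finset.mem_univ v0)
    have hd9 : G.dist v0 x0 = G.dist x0 v0 := SimpleGraph.dist_comm
    have hd10 : G.dist v0 w = G.dist w v0 := SimpleGraph.dist_comm
    rw [← hlen] at hd8
    omega
  set w'' := p.getVert (j + 2) with hw''def
  have hw''P : w'' ∈ p.support := Walk.mem_support_iff_exists_getVert.mpr ⟨j + 2, rfl, hj2len⟩
  have hw''U : w'' ∉ mateU G u w := hPnotU _ hw''P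
  have hw''u : w'' ≠ u := fun h => huP (h ▸ hw''P)
  have hw'w'' : G.Adj w' w'' := p.adj_getVert_succ (by omega)
  have hww'' : w ≠ w'' := by
    intro h
    have := walk_getVert_inj p hp j hjlen.le (j + 2) hj2len h
    omega
  have hdww'' : G.dist w w'' = 2 := by
    have hpath : (Walk.cons hww' (Walk.cons hw'w'' Walk.nil)).IsPath := by
      simp [Walk.cons_isPath_iff, hww'.ne, hw'w''.ne, hww'']
    have := tree_path_length hG _ hpath
    simpa using this.symm
  have hduw'' : G.dist u w'' = 3 := by
    rw [dist_first_step hG huw hw''U hw''u, hdww'']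
  -- strict decrease for the pair (x0, w'')
  have hstrict : (mate G u w w').dist x0 w'' < G.dist x0 w'' := by
    obtain ⟨q1, hl1⟩ := mate_walk_U hG huw hx0U hw'U
    have e1 : (mate G u w w').Adj w' w'' := mate_adj_of_ne hw'w'' hw'u hw''u
    have hub := SimpleGraph.dist_le (q1.concat e1)
    rw [Walk.length_concat, hl1] at hub
    have hlb : G.dist x0 w'' = G.dist x0 u + 3 := by
      rw [dist_split hG hx0U hw''U, hduw'']
    omega
  -- the swap
  set τ : V → V := fun x => if x = u then w' else if x = w' then u else x with hτdef
  have hτu : τ u = w' := by simp [hτdef]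
  have hτw' : τ w' = u := by simp [hτdef, hw'u]
  have hτe : ∀ x, x ≠ u → x ≠ w' → τ x = x := by
    intro x h1 h2; simp [hτdef, h1, h2]
  have hτfix : ∀ x ∈ mateU G u w, τ x = x := fun x hx =>
    hτe x (mateU_ne_u hx) (fun h => hw'U (h ▸ hx))
  have hτU : ∀ x, τ x ∈ mateU G u w ↔ x ∈ mateU G u w := by
    intro x
    by_cases h1 : x = u
    · subst h1; rw [hτu]; exact iff_of_false hw'U u_not_mem_mateU
    · by_cases h2 : x = w'
      · subst h2; rw [hτw']; exact iff_of_false u_not_mem_mateU hw'U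
      · rw [hτe x h1 h2]
  have hττ : ∀ x, τ (τ x) = x := by
    intro x
    by_cases h1 : x = u
    · subst h1; rw [hτu, hτw']
    · by_cases h2 : x = w'
      · subst h2; rw [hτw', hτu]
      · rw [hτe x h1 h2, hτe x h1 h2]
  set σ : V × V → V × V := fun q =>
    (if q.2 ∈ mateU G u w then τ q.1 else q.1,
     if q.1 ∈ mateU G u w then τ q.2 else q.2) with hσdef
  have hσboth : ∀ a b : V, (a ∈ mateU G u w ↔ b ∈ mateU G u w) → σ (a, b) = (a, b) := by
    intro a b hiff
    by_cases haU : a ∈ mateU G u w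
    · have hbU := hiff.mp haU
      simp only [hσdef]
      rw [if_pos hbU, if_pos haU, hτfix a haU, hτfix b hbU]
    · have hbU : b ∉ mateU G u w := fun h => haU (hiff.mpr h)
      simp only [hσdef]
      rw [if_neg hbU, if_neg haU]
  have hσmix1 : ∀ a b : V, a ∈ mateU G u w → b ∉ mateU G u w → σ (a, b) = (a, τ b) := by
    intro a b haU hbU
    simp only [hσdef]
    rw [if_neg hbU, if_pos haU]
  have hσmix2 : ∀ a b : V, a ∉ mateU G u w → b ∈ mateU G u w → σ (a, b) = (τ a, b) := by
    intro a b haU hbU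
    simp only [hσdef]
    rw [if_pos hbU, if_neg haU]
  have hσ_invol : ∀ q : V × V, σ (σ q) = q := by
    rintro ⟨a, b⟩
    by_cases haU : a ∈ mateU G u w <;> by_cases hbU : b ∈ mateU G u w
    · rw [hσboth a b (iff_of_true haU hbU), hσboth a b (iff_of_true haU hbU)]
    · rw [hσmix1 a b haU hbU, hσmix1 a (τ b) haU (fun h => hbU ((hτU b).mp h)), hττ]
    · rw [hσmix2 a b haU hbU, hσmix2 (τ a) b (fun h => haU ((hτU a).mp h)) hbU, hττ]
    · rw [hσboth a b (iff_of_false haU hbU), hσboth a b (iff_of_false haU hbU)]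
  have hσne : ∀ a b : V, a ≠ b → (σ (a, b)).1 ≠ (σ (a, b)).2 := by
    intro a b hab
    by_cases haU : a ∈ mateU G u w <;> by_cases hbU : b ∈ mateU G u w
    · rw [hσboth a b (iff_of_true haU hbU)]; exact hab
    · rw [hσmix1 a b haU hbU]
      intro h
      have h' : a = τ b := h
      exact hbU ((hτU b).mp (h' ▸ haU))
    · rw [hσmix2 a b haU hbU]
      intro h
      have h' : τ a = b := h
      exact haU ((hτU a).mp (h'.symm ▸ hbU))
    · rw [hσboth a b (iff_of_false haU hbU)]; exact hab
  have hσmem : ∀ q ∈ Finset.univ.offDiag, σ q ∈ (Finset.univ : Finset V).offDiag := by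
    rintro ⟨a, b⟩ hq
    rw [Finset.mem_offDiag] at hq ⊢
    exact ⟨Finset.mem_univ _, Finset.mem_univ _, hσne a b hq.2.2⟩
  -- the key distance bound
  have hkey : ∀ a b : V, a ≠ b → (mate G u w w').dist (σ (a, b)).1 (σ (a, b)).2 ≤ G.dist a b := by
    have hdir : ∀ a b : V, a ∈ mateU G u w → b ∉ mateU G u w →
        (mate G u w w').dist a (τ b) ≤ G.dist a b := by
      intro a b haU hbU
      by_cases hbu : b = u
      · subst hbu; rw [hτu]
        exact key_D hG huw haU hw'U
      · by_cases hbw' : b = w'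
        · subst hbw'; rw [hτw']
          exact key_E hG huw hww' haU hw'U hw'u h2
        · rw [hτe b hbu hbw']
          exact key_C hG huw hww' haU hw'U hbU hbu
    intro a b hab
    by_cases haU : a ∈ mateU G u w <;> by_cases hbU : b ∈ mateU G u w
    · rw [hσboth a b (iff_of_true haU hbU)]
      exact key_in hG huw haU hbU hw'U
    · rw [hσmix1 a b haU hbU]
      exact hdir a b haU hbU
    · rw [hσmix2 a b haU hbU]
      calc (mate G u w w').dist (τ a) b = (mate G u w w').dist b (τ a) := SimpleGraph.dist_comm
        _ ≤ G.dist b a := hdir b a hbU haU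
        _ = G.dist a b := SimpleGraph.dist_comm
    · rw [hσboth a b (iff_of_false haU hbU)]
      exact key_out hG haU hbU
  -- reindex the sum for T'
  have hsum_eq : ∑ q ∈ Finset.univ.offDiag, g ((mate G u w w').dist (σ q).1 (σ q).2)
      = ∑ q ∈ Finset.univ.offDiag, g ((mate G u w w').dist q.1 q.2) :=
    Finset.sum_nbij' σ σ hσmem hσmem
      (fun a _ => hσ_invol a) (fun a _ => hσ_invol a) (fun a _ => rfl)
  have hterm : ∀ q ∈ (Finset.univ : Finset V).offDiag,
      g ((mate G u w w').dist (σ q).1 (σ q).2) ≤ g (G.dist q.1 q.2) := by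
    rintro ⟨a, b⟩ hq
    exact hgmono (hkey a b (Finset.mem_offDiag.mp hq).2.2)
  have hle : ∑ q ∈ Finset.univ.offDiag, g ((mate G u w w').dist q.1 q.2)
      ≤ ∑ q ∈ Finset.univ.offDiag, g (G.dist q.1 q.2) := by
    rw [← hsum_eq]
    exact Finset.sum_le_sum hterm
  constructor
  · rw [wiener, wiener]
    linarith
  · intro hgs
    have hx0w'' : x0 ≠ w'' := fun h => hw''U (h ▸ hx0U)
    have hwit : (x0, w'') ∈ (Finset.univ : Finset V).offDiag :=
      Finset.mem_offDiag.mpr ⟨Finset.mem_univ _, Finset.mem_univ _, hx0w''⟩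
    have hfix : σ (x0, w'') = (x0, w'') := by
      rw [hσmix1 x0 w'' hx0U hw''U, hτe w'' hw''u hw'w''.ne']
    have hlt : ∑ q ∈ Finset.univ.offDiag, g ((mate G u w w').dist (σ q).1 (σ q).2)
        < ∑ q ∈ Finset.univ.offDiag, g (G.dist q.1 q.2) := by
      refine Finset.sum_lt_sum hterm ⟨(x0, w''), hwit, ?_⟩
      rw [hfix]
      exact hgs hstrict
    rw [hsum_eq] at hlt
    simp only [wiener]
    linarith
end
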